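/- arXiv:1605.02859 — 3 statements merged into one kernel-verified Lean document; each statement's English description precedes it below -/
import Mathlib

section
/- For n ≥ 1: (a) {A_z : z ∈ A_n} is an R-basis of the alternating Hecke algebra A_n(q) = H^+; (b) {A_z : z ∈ S_n ∖ A_n} is an R-basis of H^−; (c) as an R-module, H_n = H^+ ⊕ H^−. -/
open scoped Classical

noncomputable section

/-- The simple transposition swapping `i` and `i+1` (0-indexed; this is the Coxeter
generator `s_{i+1}` in 1-indexed notation) in the symmetric group on `Fin n`. -/
def sTr (n i : ℕ) : Equiv.Perm (Fin n) :=
  if h : i + 1 < n then Equiv.swap ⟨i, Nat.lt_of_succ_lt h⟩ ⟨i + 1, h⟩ else 1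

/-- The Coxeter length: the minimal length of an expression of `w` as a product of
simple transpositions. -/
def len (n : ℕ) (w : Equiv.Perm (Fin n)) : ℕ :=
  sInf {k | ∃ l : List ℕ, l.length = k ∧ (∀ i ∈ l, i + 1 < n) ∧ w = (l.map (sTr n)).prod}

/-- The (strict) Bruhat order on the symmetric group: `y < z` iff `z` can be obtained
from `y` by successively multiplying by reflections, increasing the length at each step. -/
def bruhatLT (n : ℕ) (y z : Equiv.Perm (Fin n)) : Prop :=
  Relation.TransGen
    (fun a b => (∃ u v : Fin n, u ≠ v ∧ b = a * Equiv.swap u v) ∧ len n a < len n b) y z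

/-- `y ≺ z` iff `y < z` in the Bruhat order and `ℓ(y) ≢ ℓ(z) (mod 2)`. -/
def precLT (n : ℕ) (y z : Equiv.Perm (Fin n)) : Prop :=
  bruhatLT n y z ∧ ¬ (len n y % 2 = len n z % 2)

/-- The element `A_z = ½(T_z + ε_z T_z^#)`. -/
def Aelt {R H : Type*} [CommRing R] [Ring H] [Algebra R H] (n : ℕ)
    (T : Equiv.Perm (Fin n) → H) (hash : H ≃ₐ[R] H) (z : Equiv.Perm (Fin n)) : H :=
  Ring.inverse (2 : R) • (T z + ((-1 : R) ^ len n z) • hash (T z))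

/-- The `ε`-eigenspace `H^ε = {h ∈ H : h^# = ε h}` of an algebra automorphism,
viewed as an `R`-submodule. -/
def fixedSubmodule {R H : Type*} [CommRing R] [Ring H] [Algebra R H]
    (φ : H ≃ₐ[R] H) (ε : R) : Submodule R H where
  carrier := {x | φ x = ε • x}
  add_mem' := by
    intro a b ha hb
    simp only [Set.mem_setOf_eq] at *
    rw [map_add, ha, hb, smul_add]
  zero_mem' := by simp
  smul_mem' := by
    intro c a ha
    simp only [Set.mem_setOf_eq] at *
    rw [map_smul, ha, smul_smul, smul_smul, mul_comm]

namespace AHA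

variable {n : ℕ}

abbrev valid (n : ℕ) (l : List ℕ) : Prop := ∀ i ∈ l, i + 1 < n

abbrev wperm (n : ℕ) (l : List ℕ) : Equiv.Perm (Fin n) := (l.map (sTr n)).prod

lemma sTr_mul_self (i : ℕ) : sTr n i * sTr n i = 1 := by
  unfold sTr
  split
  · exact Equiv.swap_mul_self _ _
  · exact one_mul 1

lemma sTr_inv (i : ℕ) : (sTr n i)⁻¹ = sTr n i :=
  inv_eq_of_mul_eq_one_right (sTr_mul_self i)

lemma wperm_append (l₁ l₂ : List ℕ) : wperm n (l₁ ++ l₂) = wperm n l₁ * wperm n l₂ := by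
  simp [wperm, List.map_append, List.prod_append]

lemma wperm_reverse (l : List ℕ) : wperm n l.reverse = (wperm n l)⁻¹ := by
  induction l with
  | nil => simp [wperm]
  | cons a t ih =>
      rw [List.reverse_cons, wperm_append]
      have : wperm n [a] = sTr n a := by simp [wperm]
      simp only [this, ih]
      have : wperm n (a :: t) = sTr n a * wperm n t := by simp [wperm]
      rw [this, mul_inv_rev, sTr_inv]

lemma exists_word (w : Equiv.Perm (Fin n)) : ∃ l : List ℕ, valid n l ∧ w = wperm n l := by
  cases n with
  | zero =>
      refine ⟨[], by simp [valid], ?_⟩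
      apply Equiv.ext; intro x; exact absurd x.2 (Nat.not_lt_zero _)
  | succ m =>
      have hw : w ∈ Submonoid.closure
          (Set.range fun i : Fin m => Equiv.swap i.castSucc i.succ) := by
        rw [Equiv.Perm.mclosure_swap_castSucc_succ]; trivial
      refine Submonoid.closure_induction ?_ ⟨[], by simp [valid, wperm], by simp [wperm]⟩
        ?_ hw
      · rintro _ ⟨i, rfl⟩ 
        refine ⟨[i.val], ?_, ?_⟩
        · intro j hj; simp at hj; subst hj; exact Nat.succ_lt_succ i.2
        · have h : (i.val : ℕ) + 1 < m + 1 := Nat.succ_lt_succ i.2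
          simp only [wperm, List.map_cons, List.map_nil, List.prod_cons, List.prod_nil,
            mul_one, sTr, dif_pos h]
          first
          | rfl
          | (congr 1 <;> exact Fin.ext rfl)
      · rintro x y - - ⟨lx, hlx, rfl⟩ ⟨ly, hly, rfl⟩
        exact ⟨lx ++ ly, fun i hi => ((List.mem_append.mp hi).elim (hlx i) (hly i)),
          (wperm_append lx ly).symm⟩

lemma len_set_nonempty (w : Equiv.Perm (Fin n)) :
    {k | ∃ l : List ℕ, l.length = k ∧ valid n l ∧ w = wperm n l}.Nonempty := by
  obtain ⟨l, hv, hw⟩ := exists_word w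
  exact ⟨l.length, l, rfl, hv, hw⟩

lemma exists_reduced (w : Equiv.Perm (Fin n)) :
    ∃ l : List ℕ, l.length = len n w ∧ valid n l ∧ w = wperm n l :=
  Nat.sInf_mem (len_set_nonempty w)

lemma len_le {w : Equiv.Perm (Fin n)} {l : List ℕ} (hv : valid n l) (hw : w = wperm n l) :
    len n w ≤ l.length :=
  Nat.sInf_le ⟨l, rfl, hv, hw⟩

lemma len_one : len n (1 : Equiv.Perm (Fin n)) = 0 :=
  Nat.le_zero.mp (len_le (l := []) (by simp [valid]) (by simp [wperm]))

lemma len_eq_zero {w : Equiv.Perm (Fin n)} (h : len n w = 0) : w = 1 := by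
  obtain ⟨l, hl, hv, hw⟩ := exists_reduced w
  rw [h] at hl
  rw [hw, List.length_eq_zero_iff.mp hl]; simp [wperm]

lemma len_mul_le (w v : Equiv.Perm (Fin n)) : len n (w * v) ≤ len n w + len n v := by
  obtain ⟨lw, hlw, hvw, rfl⟩ := exists_reduced w
  obtain ⟨lv, hlv, hvv, rfl⟩ := exists_reduced v
  calc len n (wperm n lw * wperm n lv) ≤ (lw ++ lv).length :=
        len_le (fun i hi => ((List.mem_append.mp hi).elim (hvw i) (hvv i)))
          (wperm_append lw lv).symm
    _ = len n (wperm n lw) + len n (wperm n lv) := by simp [hlw, hlv]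

lemma len_inv (w : Equiv.Perm (Fin n)) : len n w⁻¹ = len n w := by
  have key : ∀ v : Equiv.Perm (Fin n), len n v⁻¹ ≤ len n v := by
    intro v
    obtain ⟨l, hl, hv, rfl⟩ := exists_reduced v
    calc len n (wperm n l)⁻¹ ≤ l.reverse.length :=
          len_le (fun i hi => hv i (List.mem_reverse.mp hi)) (wperm_reverse l).symm
      _ = len n (wperm n l) := by simp [hl]
  exact le_antisymm (key w) (by simpa using key w⁻¹)

lemma sign_sTr {i : ℕ} (hi : i + 1 < n) : Equiv.Perm.sign (sTr n i) = -1 := by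
  rw [sTr, dif_pos hi]
  exact Equiv.Perm.sign_swap (by simp [Fin.ext_iff])

lemma sign_wperm {l : List ℕ} (hv : valid n l) :
    Equiv.Perm.sign (wperm n l) = (-1) ^ l.length := by
  induction l with
  | nil => simp [wperm]
  | cons a t ih =>
      have : wperm n (a :: t) = sTr n a * wperm n t := by simp [wperm]
      rw [this, map_mul, sign_sTr (hv a (by simp)), ih (fun i hi => hv i (by simp [hi]))]
      simp [pow_succ, mul_comm]

lemma sign_len (w : Equiv.Perm (Fin n)) : Equiv.Perm.sign w = (-1) ^ len n w := by
  obtain ⟨l, hl, hv, rfl⟩ := exists_reduced w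
  rw [sign_wperm hv, hl]

lemma len_mul_sTr_ne {i : ℕ} (hi : i + 1 < n) (w : Equiv.Perm (Fin n)) :
    len n (w * sTr n i) ≠ len n w := by
  intro h
  have h1 : Equiv.Perm.sign (w * sTr n i) = -Equiv.Perm.sign w := by
    rw [map_mul, sign_sTr hi, mul_neg_one]
  rw [sign_len, sign_len, h] at h1
  have h2 : (1 : ℤˣ) * (-1) ^ len n w = (-1) * (-1) ^ len n w := by
    rw [one_mul, neg_one_mul, ← h1]
  exact absurd (mul_right_cancel h2) (by decide)

lemma len_mul_sTr {i : ℕ} (hi : i + 1 < n) (w : Equiv.Perm (Fin n)) :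
    len n (w * sTr n i) = len n w + 1 ∨ len n (w * sTr n i) + 1 = len n w := by
  have h1 : len n (w * sTr n i) ≤ len n w + 1 := by
    have := len_mul_le w (sTr n i)
    have hs : len n (sTr n i) ≤ 1 := len_le (l := [i]) (by intro j hj; simp at hj; subst hj; exact hi) (by simp [wperm])
    omega
  have h2 : len n w ≤ len n (w * sTr n i) + 1 := by
    have := len_mul_le (w * sTr n i) (sTr n i)
    rw [mul_assoc, sTr_mul_self, mul_one] at this
    have hs : len n (sTr n i) ≤ 1 := len_le (l := [i]) (by intro j hj; simp at hj; subst hj; exact hi) (by simp [wperm])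
    omega
  have h3 := len_mul_sTr_ne hi w
  omega

lemma prefix_reduced {l' : List ℕ} {i : ℕ} (hv : valid n (l' ++ [i]))
    (hred : (l' ++ [i]).length = len n (wperm n (l' ++ [i]))) :
    l'.length = len n (wperm n l') ∧
      len n (wperm n (l' ++ [i])) = len n (wperm n l') + 1 := by
  have hv' : valid n l' := fun j hj => hv j (by simp [hj])
  have h1 : len n (wperm n l') ≤ l'.length := len_le hv' rfl
  have h2 : wperm n (l' ++ [i]) = wperm n l' * sTr n i := by
    rw [wperm_append]; simp [wperm]
  have h3 : len n (wperm n (l' ++ [i])) ≤ len n (wperm n l') + 1 := by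
    rw [h2]
    have := len_mul_le (wperm n l') (sTr n i)
    have hs : len n (sTr n i) ≤ 1 :=
      len_le (l := [i]) (by intro j hj; simp at hj; subst hj; exact hv _ (by simp)) (by simp [wperm])
    omega
  have h4 : (l' ++ [i]).length = l'.length + 1 := by simp
  omega

end AHA


namespace AHA

variable {R : Type*} [CommRing R] {H : Type*} [Ring H] [Algebra R H] {n : ℕ}

/-- The length filtration. -/
def Fil (R : Type*) [CommRing R] {H : Type*} [Ring H] [Algebra R H] {n : ℕ}
    (T : Equiv.Perm (Fin n) → H) (k : ℕ) : Submodule R H :=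
  Submodule.span R (T '' {y | len n y ≤ k})

lemma Fil_mono (T : Equiv.Perm (Fin n) → H) {k k' : ℕ} (h : k ≤ k') :
    Fil R T k ≤ Fil R T k' :=
  Submodule.span_mono (Set.image_mono fun _ hy => le_trans hy h)

lemma T_mem_Fil (T : Equiv.Perm (Fin n) → H) {y : Equiv.Perm (Fin n)} {k : ℕ}
    (h : len n y ≤ k) : T y ∈ Fil R T k :=
  Submodule.subset_span ⟨y, h, rfl⟩

section Main

variable (q : R) (T : Equiv.Perm (Fin n) → H)
  (hT1 : T 1 = 1)
  (hmul1 : ∀ (w : Equiv.Perm (Fin n)) (i : ℕ), i + 1 < n →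
    len n (w * sTr n i) = len n w + 1 → T w * T (sTr n i) = T (w * sTr n i))
  (hmul2 : ∀ (w : Equiv.Perm (Fin n)) (i : ℕ), i + 1 < n →
    len n (w * sTr n i) + 1 = len n w →
    T w * T (sTr n i) = T (w * sTr n i) + (q - Ring.inverse q) • T w)

include hmul1 hmul2 in
/-- Right multiplication by a generator raises filtration degree by at most one. -/
lemma mul_sTr_mem {k : ℕ} {x : H} (hx : x ∈ Fil R T k) {i : ℕ} (hi : i + 1 < n) :
    x * T (sTr n i) ∈ Fil R T (k + 1) := by
  have hrw : x * T (sTr n i) = (LinearMap.mulRight R (T (sTr n i))) x := rfl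
  rw [hrw]
  refine Submodule.span_induction ?_ (by simp) ?_ ?_ hx
  · rintro _ ⟨y, hy, rfl⟩
    simp only [Set.mem_setOf_eq] at hy
    simp only [LinearMap.mulRight_apply]
    rcases len_mul_sTr hi y with hcase | hcase
    · rw [hmul1 y i hi hcase]
      exact T_mem_Fil T (by omega)
    · rw [hmul2 y i hi hcase]
      exact add_mem (T_mem_Fil T (by omega))
        (Submodule.smul_mem _ _ (T_mem_Fil T (by omega)))
  · intro a b _ _ ha hb
    rw [map_add]; exact add_mem ha hb
  · intro r a _ ha
    rw [map_smul]; exact Submodule.smul_mem _ _ ha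

include hT1 hmul1 in
/-- For reduced words, `T` of the product is the product of the `T (sTr _)`. -/
lemma T_wperm : ∀ l : List ℕ, valid n l → l.length = len n (wperm n l) →
    T (wperm n l) = (l.map fun i => T (sTr n i)).prod := by
  intro l
  induction l using List.reverseRecOn with
  | nil => intro _ _; simpa [wperm] using hT1
  | append_singleton l' i ih =>
      intro hv hred
      obtain ⟨h1, h2⟩ := prefix_reduced hv hred
      have hi : i + 1 < n := hv i (by simp)
      have hperm : wperm n (l' ++ [i]) = wperm n l' * sTr n i := by
        rw [wperm_append]; simp [wperm]
      rw [hperm, ← hmul1 (wperm n l') i hi (by rw [← hperm, ← h2]),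
        ih (fun j hj => hv j (by simp [hj])) h1]
      simp

include hT1 hmul2 in
lemma Ts_inv {i : ℕ} (hi : i + 1 < n) :
    T (sTr n i) * (T (sTr n i) - (q - Ring.inverse q) • 1) = 1 ∧
      (T (sTr n i) - (q - Ring.inverse q) • 1) * T (sTr n i) = 1 := by
  have hlen : len n (sTr n i * sTr n i) + 1 = len n (sTr n i) := by
    rw [sTr_mul_self, len_one]
    have h1 : len n (sTr n i) ≤ 1 :=
      len_le (l := [i]) (by intro j hj; simp at hj; subst hj; exact hi) (by simp [wperm])
    have h2 : sTr n i ≠ 1 := by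
      rw [sTr, dif_pos hi]
      intro h
      have h' := DFunLike.congr_fun h ⟨i, Nat.lt_of_succ_lt hi⟩
      rw [Equiv.swap_apply_left] at h'
      simp [Fin.ext_iff] at h'
    have h3 : len n (sTr n i) ≠ 0 := fun h => h2 (len_eq_zero h)
    omega
  have key := hmul2 (sTr n i) i hi hlen
  rw [sTr_mul_self, hT1] at key
  constructor
  · rw [mul_sub, key, mul_smul_comm, mul_one]; abel
  · rw [sub_mul, smul_mul_assoc, one_mul, key]; abel

include hT1 hmul1 hmul2 in
/-- Product of the inverses of generators along a reduced word, triangularity. -/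
lemma prod_inv_triangular : ∀ l : List ℕ, valid n l → l.length = len n (wperm n l) →
    (l.map fun i => T (sTr n i) - (q - Ring.inverse q) • 1).prod - T (wperm n l) ∈
      Fil R T (l.length - 1) := by
  intro l
  induction l using List.reverseRecOn with
  | nil => intro _ _; simp [wperm, hT1]
  | append_singleton l' i ih =>
      intro hv hred
      obtain ⟨h1, h2⟩ := prefix_reduced hv hred
      have hi : i + 1 < n := hv i (by simp)
      have hv' : valid n l' := fun j hj => hv j (by simp [hj])
      have hperm : wperm n (l' ++ [i]) = wperm n l' * sTr n i := by
        rw [wperm_append]; simp [wperm]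
      set c : R := q - Ring.inverse q with hc
      set P' : H := (l'.map fun i => T (sTr n i) - c • 1).prod with hP'
      have hx : P' - T (wperm n l') ∈ Fil R T (l'.length - 1) := ih hv' h1
      have hprod : ((l' ++ [i]).map fun i => T (sTr n i) - c • 1).prod
          = P' * (T (sTr n i) - c • 1) := by
        rw [List.map_append, List.prod_append]; simp [hP']
      rw [hprod, hperm]
      have hTT : T (wperm n l') * T (sTr n i) = T (wperm n l' * sTr n i) :=
        hmul1 _ i hi (by rw [← hperm, ← h2])
      have expand : P' * (T (sTr n i) - c • 1) - T (wperm n l' * sTr n i)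
          = (P' - T (wperm n l')) * T (sTr n i) - c • P' := by
        rw [mul_sub, sub_mul, hTT, mul_smul_comm, mul_one]; abel
      rw [expand]
      rcases Nat.eq_zero_or_pos l'.length with h0 | hpos
      · have hnil : l' = [] := List.eq_nil_of_length_eq_zero h0
        subst hnil
        have hP1 : P' = 1 := by simp [hP']
        have hw1 : wperm n ([] : List ℕ) = 1 := by simp [wperm]
        rw [hP1, hw1, hT1]
        have hrw : (1 - (1:H)) * T (sTr n i) - c • 1 = -(c • 1) := by simp
        rw [hrw]
        refine neg_mem (Submodule.smul_mem _ _ ?_)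
        rw [← hT1]
        exact T_mem_Fil T (by simp [len_one])
      · have hlen : (l' ++ [i]).length - 1 = (l'.length - 1) + 1 := by
          simp; omega
        rw [hlen]
        refine sub_mem (mul_sTr_mem q T hmul1 hmul2 hx hi) (Submodule.smul_mem _ _ ?_)
        have hsplit : P' = (P' - T (wperm n l')) + T (wperm n l') := by abel
        rw [hsplit]
        refine add_mem (Fil_mono T (by omega) hx) (T_mem_Fil T ?_)
        rw [← h1]; omega

include hT1 hmul2 in
/-- Two-sided inverse for the product along a word. -/
lemma list_inv : ∀ l : List ℕ, valid n l →
    ((l.reverse.map fun i => T (sTr n i) - (q - Ring.inverse q) • 1).prod)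
        * ((l.map fun i => T (sTr n i)).prod) = 1 ∧
      ((l.map fun i => T (sTr n i)).prod)
        * ((l.reverse.map fun i => T (sTr n i) - (q - Ring.inverse q) • 1).prod) = 1 := by
  intro l
  induction l with
  | nil => simp
  | cons a t ih =>
      intro hv
      have ha : a + 1 < n := hv a (by simp)
      have hvt : valid n t := fun j hj => hv j (by simp [hj])
      obtain ⟨ih1, ih2⟩ := ih hvt
      obtain ⟨hs1, hs2⟩ := Ts_inv q T hT1 hmul2 ha
      constructor
      · rw [List.reverse_cons, List.map_append, List.prod_append, List.map_cons,
          List.prod_cons]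
        try simp only [List.map_cons, List.prod_cons, List.map_nil, List.prod_nil, mul_one]
        calc (t.reverse.map fun i => T (sTr n i) - (q - Ring.inverse q) • 1).prod *
              (T (sTr n a) - (q - Ring.inverse q) • 1) *
              (T (sTr n a) * (t.map fun i => T (sTr n i)).prod)
            = (t.reverse.map fun i => T (sTr n i) - (q - Ring.inverse q) • 1).prod *
              (((T (sTr n a) - (q - Ring.inverse q) • 1) * T (sTr n a)) *
              (t.map fun i => T (sTr n i)).prod) := by simp only [mul_assoc]
          _ = 1 := by rw [hs2, one_mul, ih1]
      · rw [List.reverse_cons, List.map_append, List.prod_append, List.map_cons,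
          List.prod_cons]
        try simp only [List.map_cons, List.prod_cons, List.map_nil, List.prod_nil, mul_one]
        calc T (sTr n a) * (t.map fun i => T (sTr n i)).prod *
              ((t.reverse.map fun i => T (sTr n i) - (q - Ring.inverse q) • 1).prod *
              (T (sTr n a) - (q - Ring.inverse q) • 1))
            = T (sTr n a) * (((t.map fun i => T (sTr n i)).prod *
              (t.reverse.map fun i => T (sTr n i) - (q - Ring.inverse q) • 1).prod) *
              (T (sTr n a) - (q - Ring.inverse q) • 1)) := by simp only [mul_assoc]
          _ = 1 := by rw [ih2, one_mul, hs1]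

lemma ring_inverse_of (a b : H) (h1 : a * b = 1) (h2 : b * a = 1) : Ring.inverse a = b := by
  have h3 : Ring.inverse ((Units.mk a b h1 h2 : Hˣ) : H) = ((Units.mk a b h1 h2)⁻¹ : Hˣ) :=
    Ring.inverse_unit _
  simpa using h3

include hT1 hmul1 hmul2 in
/-- Triangularity of the inverse of `T w`. -/
lemma inv_T_triangular (w : Equiv.Perm (Fin n)) :
    Ring.inverse (T w) - T w⁻¹ ∈ Fil R T (len n w - 1) := by
  obtain ⟨l, hl, hv, rfl⟩ := exists_reduced w
  have hvr : valid n l.reverse := fun j hj => hv j (List.mem_reverse.mp hj)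
  have hTw : T (wperm n l) = (l.map fun i => T (sTr n i)).prod := T_wperm T hT1 hmul1 l hv hl
  obtain ⟨hinv1, hinv2⟩ := list_inv q T hT1 hmul2 l hv
  have hRinv : Ring.inverse (T (wperm n l))
      = (l.reverse.map fun i => T (sTr n i) - (q - Ring.inverse q) • 1).prod := by
    apply ring_inverse_of
    · rw [hTw]; exact hinv2
    · rw [hTw]; exact hinv1
  rw [hRinv]
  have hredrev : l.reverse.length = len n (wperm n l.reverse) := by
    rw [wperm_reverse, len_inv, ← hl]; simp
  have htri := prod_inv_triangular q T hT1 hmul1 hmul2 l.reverse hvr hredrev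
  rw [wperm_reverse] at htri
  simpa [← hl] using htri

end Main

end AHA

namespace AHA

variable {R : Type*} [CommRing R] {H : Type*} [Ring H] [Algebra R H] {n : ℕ}

lemma hash_ring_inverse (hash : H ≃ₐ[R] H) {a : H} (ha : IsUnit a) :
    hash (Ring.inverse a) = Ring.inverse (hash a) := by
  symm
  apply ring_inverse_of
  · rw [← map_mul, Ring.mul_inverse_cancel _ ha, map_one]
  · rw [← map_mul, Ring.inverse_mul_cancel _ ha, map_one]

lemma neg_one_pow_sq (k : ℕ) : ((-1 : R) ^ k) * ((-1 : R) ^ k) = 1 := by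
  rw [← pow_add]
  exact Even.neg_one_pow ⟨k, rfl⟩

section Main

variable (q : R) (T : Equiv.Perm (Fin n) → H)
  (hT1 : T 1 = 1)
  (hTunit : ∀ w, IsUnit (T w))
  (hmul1 : ∀ (w : Equiv.Perm (Fin n)) (i : ℕ), i + 1 < n →
    len n (w * sTr n i) = len n w + 1 → T w * T (sTr n i) = T (w * sTr n i))
  (hmul2 : ∀ (w : Equiv.Perm (Fin n)) (i : ℕ), i + 1 < n →
    len n (w * sTr n i) + 1 = len n w →
    T w * T (sTr n i) = T (w * sTr n i) + (q - Ring.inverse q) • T w)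
  (hash : H ≃ₐ[R] H)
  (hhash : ∀ w, hash (T w) = ((-1 : R) ^ len n w) • Ring.inverse (T w⁻¹))

include hTunit hhash in
lemma hash_hash_T (w : Equiv.Perm (Fin n)) : hash (hash (T w)) = T w := by
  rw [hhash w, map_smul, hash_ring_inverse hash (hTunit w⁻¹), hhash w⁻¹, len_inv, inv_inv]
  have key : Ring.inverse (((-1 : R) ^ len n w) • Ring.inverse (T w)) =
      ((-1 : R) ^ len n w) • T w := by
    apply ring_inverse_of
    · rw [smul_mul_assoc, mul_smul_comm, smul_smul, neg_one_pow_sq,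
        Ring.inverse_mul_cancel _ (hTunit w), one_smul]
    · rw [smul_mul_assoc, mul_smul_comm, smul_smul, neg_one_pow_sq,
        Ring.mul_inverse_cancel _ (hTunit w), one_smul]
  rw [key, smul_smul, neg_one_pow_sq, one_smul]

include hhash in
lemma Aelt_eq (z : Equiv.Perm (Fin n)) :
    Aelt n T hash z = Ring.inverse (2 : R) • (T z + Ring.inverse (T z⁻¹)) := by
  rw [Aelt, hhash z, smul_smul, neg_one_pow_sq, one_smul]

include hT1 hmul1 hmul2 hhash in
lemma Aelt_sub_T (h2 : IsUnit (2 : R)) (z : Equiv.Perm (Fin n)) :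
    Aelt n T hash z - T z ∈ Fil R T (len n z - 1) := by
  have hy : Ring.inverse (T z⁻¹) - T z ∈ Fil R T (len n z - 1) := by
    have := inv_T_triangular q T hT1 hmul1 hmul2 z⁻¹
    rwa [inv_inv, len_inv] at this
  have key : Aelt n T hash z - T z
      = Ring.inverse (2 : R) • (Ring.inverse (T z⁻¹) - T z) := by
    rw [Aelt_eq T hash hhash z]
    have h1 : T z + Ring.inverse (T z⁻¹)
        = (2 : R) • T z + (Ring.inverse (T z⁻¹) - T z) := by
      rw [two_smul]; abel
    rw [h1, smul_add, smul_smul, Ring.inverse_mul_cancel _ h2, one_smul]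
    abel
  rw [key]
  exact Submodule.smul_mem _ _ hy

include hT1 hhash in
lemma Aelt_one (h2 : IsUnit (2 : R)) : Aelt n T hash 1 = T 1 := by
  rw [Aelt_eq T hash hhash, inv_one, hT1, Ring.inverse_one, ← two_smul R (1 : H),
    smul_smul, Ring.inverse_mul_cancel _ h2, one_smul]

include hT1 hmul1 hmul2 hhash in
lemma T_mem_spanA (h2 : IsUnit (2 : R)) :
    ∀ k, ∀ y : Equiv.Perm (Fin n), len n y ≤ k →
      T y ∈ Submodule.span R (Set.range (Aelt n T hash)) := by
  intro k
  induction k with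
  | zero =>
      intro y hy
      have h1 : y = 1 := len_eq_zero (Nat.le_zero.mp hy)
      subst h1
      rw [← Aelt_one T hT1 hash hhash h2]
      exact Submodule.subset_span ⟨1, rfl⟩
  | succ k ih =>
      intro y hy
      rcases le_or_gt (len n y) k with h | h
      · exact ih y h
      · have hFil : Fil R T k ≤ Submodule.span R (Set.range (Aelt n T hash)) := by
          rw [Fil, Submodule.span_le]
          rintro _ ⟨u, hu, rfl⟩
          exact ih u hu
        have h1 : T y = Aelt n T hash y - (Aelt n T hash y - T y) := by abel
        rw [h1]
        refine sub_mem (Submodule.subset_span ⟨y, rfl⟩) (hFil ?_)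
        have := Aelt_sub_T q T hT1 hmul1 hmul2 hash hhash h2 y
        have hk : len n y - 1 ≤ k := by omega
        exact Fil_mono T hk this

include hT1 hmul1 hmul2 hhash in
lemma spanA_top (h2 : IsUnit (2 : R)) (bT : Module.Basis (Equiv.Perm (Fin n)) R H)
    (hbT : ∀ w, bT w = T w) :
    Submodule.span R (Set.range (Aelt n T hash)) = ⊤ := by
  rw [eq_top_iff, ← bT.span_eq, Submodule.span_le]
  rintro _ ⟨w, rfl⟩
  rw [hbT w]
  exact T_mem_spanA q T hT1 hmul1 hmul2 hash hhash h2 (len n w) w le_rfl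

include hT1 hmul1 hmul2 hhash in
lemma liA (h2 : IsUnit (2 : R)) (bT : Module.Basis (Equiv.Perm (Fin n)) R H)
    (hbT : ∀ w, bT w = T w) :
    LinearIndependent R (Aelt n T hash) := by
  rw [linearIndependent_iff]
  intro f hf
  by_contra hf0
  obtain ⟨z0, hz0, hmax⟩ := Finset.exists_max_image f.support (len n)
    (Finsupp.support_nonempty_iff.mpr hf0)
  set L : H →ₗ[R] R := (Finsupp.lapply z0) ∘ₗ (bT.repr : H →ₗ[R] _) with hL
  have LT : ∀ u, L (T u) = if u = z0 then 1 else 0 := by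
    intro u
    rw [hL, LinearMap.comp_apply, ← hbT u]
    simp [Module.Basis.repr_self, Finsupp.single_apply]
  have LFil : ∀ k, k < len n z0 → ∀ x ∈ Fil R T k, L x = 0 := by
    intro k hk x hx
    have hle : Fil R T k ≤ LinearMap.ker L := by
      rw [Fil, Submodule.span_le]
      rintro _ ⟨u, hu, rfl⟩
      simp only [Set.mem_setOf_eq] at hu
      have : u ≠ z0 := fun h => by subst h; omega
      simp [SetLike.mem_coe, LinearMap.mem_ker, LT u, this]
    exact LinearMap.mem_ker.mp (hle hx)
  have LA : ∀ z, len n z ≤ len n z0 → L (Aelt n T hash z) = if z = z0 then 1 else 0 := by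
    intro z hz
    rcases Nat.eq_zero_or_pos (len n z) with h0 | hpos
    · have h1 : z = 1 := len_eq_zero h0
      subst h1
      rw [Aelt_one T hT1 hash hhash h2, LT]
    · have key : Aelt n T hash z = T z + (Aelt n T hash z - T z) := by abel
      rw [key, map_add, LT,
        LFil (len n z - 1) (by omega) _ (Aelt_sub_T q T hT1 hmul1 hmul2 hash hhash h2 z),
        add_zero]
  have happ := congrArg L hf
  rw [map_zero, Finsupp.linearCombination_apply, map_finsuppSum] at happ
  have hsum : (f.sum fun z r => L (r • Aelt n T hash z)) = f z0 := by
    rw [Finsupp.sum_eq_single z0]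
    · rw [map_smul, LA z0 le_rfl, if_pos rfl, smul_eq_mul, mul_one]
    · intro b hb hbne
      rw [map_smul, LA b (hmax b (Finsupp.mem_support_iff.mpr hb)), if_neg hbne,
        smul_eq_mul, mul_zero]
    · intro _
      rw [zero_smul, map_zero]
  rw [hsum] at happ
  exact (Finsupp.mem_support_iff.mp hz0) happ

include hTunit hhash in
lemma hash_Aelt (z : Equiv.Perm (Fin n)) :
    hash (Aelt n T hash z) = ((-1 : R) ^ len n z) • Aelt n T hash z := by
  have lhs : hash (Aelt n T hash z)
      = Ring.inverse (2 : R) • (hash (T z) + ((-1 : R) ^ len n z) • T z) := by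
    rw [Aelt, map_smul, map_add, map_smul, hash_hash_T T hTunit hash hhash z]
  have rhs : ((-1 : R) ^ len n z) • Aelt n T hash z
      = Ring.inverse (2 : R) • (((-1 : R) ^ len n z) • T z + hash (T z)) := by
    rw [Aelt, smul_comm, smul_add, smul_smul, neg_one_pow_sq, one_smul]
  rw [lhs, rhs, add_comm]

end Main

end AHA

/-- Proposition `AnBasis`: `{A_z : z ∈ 𝔄ₙ}` is an `R`-basis of the
alternating Hecke algebra `𝒜ₙ(q) = H⁺`, `{A_z : z ∈ 𝔖ₙ ∖ 𝔄ₙ}` is an `R`-basis of `H⁻`,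
and, as an `R`-module, `H = H⁺ ⊕ H⁻`. -/
theorem Aelt_basis_of_alternatingHecke
    {R : Type*} [CommRing R] (q : R) (hq : IsUnit q) (hq1 : q ≠ 1) (h2 : IsUnit (2 : R))
    (n : ℕ) {H : Type*} [Ring H] [Algebra R H]
    -- the Iwahori–Hecke algebra of type A with its basis of standard elements T_w
    (T : Equiv.Perm (Fin n) → H)
    (bT : Module.Basis (Equiv.Perm (Fin n)) R H) (hbT : ∀ w, bT w = T w)
    (hT1 : T 1 = 1)
    (hTunit : ∀ w, IsUnit (T w))
    (hmul1 : ∀ (w : Equiv.Perm (Fin n)) (i : ℕ), i + 1 < n →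
      len n (w * sTr n i) = len n w + 1 → T w * T (sTr n i) = T (w * sTr n i))
    (hmul2 : ∀ (w : Equiv.Perm (Fin n)) (i : ℕ), i + 1 < n →
      len n (w * sTr n i) + 1 = len n w →
      T w * T (sTr n i) = T (w * sTr n i) + (q - Ring.inverse q) • T w)
    -- the hash involution
    (hash : H ≃ₐ[R] H)
    (hhash : ∀ w, hash (T w) = ((-1 : R) ^ len n w) • Ring.inverse (T w⁻¹))
    (hn : 1 ≤ n) :
    -- (a) {A_z : z even} is a basis of H⁺ = 𝒜ₙ(q)
    (LinearIndependent R
        (fun z : {z : Equiv.Perm (Fin n) // Even (len n z)} => Aelt n T hash z.val) ∧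
      Submodule.span R
          (Set.range fun z : {z : Equiv.Perm (Fin n) // Even (len n z)} =>
            Aelt n T hash z.val)
        = fixedSubmodule hash 1) ∧
    -- (b) {A_z : z odd} is a basis of H⁻
    (LinearIndependent R
        (fun z : {z : Equiv.Perm (Fin n) // ¬ Even (len n z)} => Aelt n T hash z.val) ∧
      Submodule.span R
          (Set.range fun z : {z : Equiv.Perm (Fin n) // ¬ Even (len n z)} =>
            Aelt n T hash z.val)
        = fixedSubmodule hash (-1)) ∧
    -- (c) H = H⁺ ⊕ H⁻ as an R-module
    IsCompl (fixedSubmodule hash 1) (fixedSubmodule hash (-1)) := by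

  classical
  set A := Aelt n T hash with hAdef
  have hspan : Submodule.span R (Set.range A) = ⊤ :=
    AHA.spanA_top q T hT1 hmul1 hmul2 hash hhash h2 bT hbT
  have li : LinearIndependent R A := AHA.liA q T hT1 hmul1 hmul2 hash hhash h2 bT hbT
  have hAeig : ∀ z, hash (A z) = ((-1 : R) ^ len n z) • A z :=
    AHA.hash_Aelt T hTunit hash hhash
  have heven : ∀ z : Equiv.Perm (Fin n), Even (len n z) → A z ∈ fixedSubmodule hash 1 := by
    intro z hz
    show hash (A z) = (1 : R) • A z
    rw [hAeig z, hz.neg_one_pow]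
  have hodd : ∀ z : Equiv.Perm (Fin n), ¬ Even (len n z) → A z ∈ fixedSubmodule hash (-1) := by
    intro z hz
    show hash (A z) = (-1 : R) • A z
    rw [hAeig z, (Nat.not_even_iff_odd.mp hz).neg_one_pow]
  -- the basis given by the A_z
  let Ab : Module.Basis (Equiv.Perm (Fin n)) R H := Module.Basis.mk li hspan.ge
  have hAb : ∀ z, Ab z = A z := fun z => Module.Basis.mk_apply li hspan.ge z
  -- key span lemma
  have key : ∀ (c : R) (p : Equiv.Perm (Fin n) → Prop), IsUnit c →
      (∀ z, p z → ((-1 : R) ^ len n z) = c) →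
      (∀ z, ¬ p z → ((-1 : R) ^ len n z) = -c) →
      ∀ x ∈ fixedSubmodule hash c,
        x ∈ Submodule.span R (Set.range fun z : {z : Equiv.Perm (Fin n) // p z} => A z.val) := by
    intro c p hcu hp hnp x hx
    have hx' : hash x = c • x := hx
    set g := Ab.repr x with hg
    have hxg : (Finsupp.linearCombination R A) g = x := by
      have := Ab.linearCombination_repr x
      rwa [show ⇑Ab = A from funext hAb] at this
    have hzero : ∀ z0, ¬ p z0 → g z0 = 0 := by
      intro z0 hz0
      set L : H →ₗ[R] R := (Finsupp.lapply z0) ∘ₗ (Ab.repr : H →ₗ[R] _) with hL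
      have LA : ∀ z, L (A z) = if z = z0 then 1 else 0 := by
        intro z
        rw [hL, LinearMap.comp_apply, ← hAb z]
        simp [Module.Basis.repr_self, Finsupp.single_apply]
      have Lx : L x = g z0 := rfl
      have h1 : L (hash x) = c * g z0 := by
        rw [hx', map_smul, Lx, smul_eq_mul]
      have h2' : L (hash x) = g z0 * (-c) := by
        have hhx : hash x = g.sum fun z r => r • (((-1 : R) ^ len n z) • A z) := by
          rw [← hxg, Finsupp.linearCombination_apply, map_finsuppSum]
          refine Finsupp.sum_congr fun z _ => ?_
          rw [map_smul, hAeig z]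
        rw [hhx, map_finsuppSum]
        rw [Finsupp.sum_eq_single z0]
        · rw [map_smul, map_smul, LA z0, if_pos rfl, hnp z0 hz0]
          simp [smul_eq_mul, mul_comm]
        · intro b hb hbne
          rw [map_smul, map_smul, LA b, if_neg hbne]
          simp
        · intro _
          simp
      have h3 : (2 * c) * g z0 = (2 * c) * 0 := by
        rw [mul_zero]
        linear_combination h1.symm.trans h2' 
      exact (h2.mul hcu).mul_left_cancel h3
    rw [← hxg, Finsupp.linearCombination_apply, Finsupp.sum]
    refine Submodule.sum_mem _ ?_
    intro z hz
    by_cases hpz : p z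
    · exact Submodule.smul_mem _ _ (Submodule.subset_span ⟨⟨z, hpz⟩, rfl⟩)
    · rw [hzero z hpz, zero_smul]
      exact Submodule.zero_mem _
  refine ⟨⟨?_, ?_⟩, ⟨?_, ?_⟩, ?_, ?_⟩
  · exact li.comp Subtype.val Subtype.val_injective
  · apply le_antisymm
    · rw [Submodule.span_le]
      rintro _ ⟨z, rfl⟩
      exact heven z.val z.2
    · intro x hx
      exact key 1 (fun z => Even (len n z)) isUnit_one
        (fun z hz => hz.neg_one_pow)
        (fun z hz => by rw [(Nat.not_even_iff_odd.mp hz).neg_one_pow]) x hx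
  · exact li.comp Subtype.val Subtype.val_injective
  · apply le_antisymm
    · rw [Submodule.span_le]
      rintro _ ⟨z, rfl⟩
      exact hodd z.val z.2
    · intro x hx
      exact key (-1) (fun z => ¬ Even (len n z)) isUnit_one.neg
        (fun z hz => (Nat.not_even_iff_odd.mp hz).neg_one_pow)
        (fun z hz => by rw [not_not] at hz; rw [hz.neg_one_pow, neg_neg]) x hx
  · rw [Submodule.disjoint_def]
    intro x hx1 hx2
    have e1 : hash x = (1 : R) • x := hx1
    have e2 : hash x = (-1 : R) • x := hx2
    have e3 : (2 : R) • x = (2 : R) • (0 : H) := by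
      have hneg := e1.symm.trans e2
      rw [one_smul, neg_smul, one_smul] at hneg
      rw [smul_zero, two_smul]
      nth_rewrite 1 [hneg]
      exact neg_add_cancel x
    exact h2.smul_left_cancel.mp e3
  · rw [codisjoint_iff, eq_top_iff, ← hspan, Submodule.span_le]
    rintro _ ⟨z, rfl⟩
    by_cases hz : Even (len n z)
    · exact Submodule.mem_sup_left (heven z hz)
    · exact Submodule.mem_sup_right (hodd z hz)


end
end

section
/- (a) For each z ∈ S_n there exists a unique element B_z ∈ H^{ε_z} of the form B_z = T_z + Σ_{y ≺ z} b_{yz} T_y with b_{yz} ∈ R, where the sum is over y ≺ z (i.e. y < z in the Bruhat order and ℓ(y) ≢ ℓ(z) mod 2). (b) {B_z : z ∈ A_n} is an R-basis of A_n(q) = H^+. (c) {B_z : z ∈ S_n ∖ A_n} is an R-basis of H^−. -/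
open scoped Classical

noncomputable section

namespace BH

variable {n : ℕ}

lemma perm_apply_inv_self {α : Type*} (f : Equiv.Perm α) (x : α) : f (f⁻¹ x) = x :=
  f.apply_symm_apply x

def invSet (w : Equiv.Perm (Fin n)) : Finset (Fin n × Fin n) :=
  Finset.univ.filter fun p => p.1 < p.2 ∧ w p.2 < w p.1

def pinv (w : Equiv.Perm (Fin n)) : ℕ := (invSet w).card

lemma mem_invSet {w : Equiv.Perm (Fin n)} {p : Fin n × Fin n} :
    p ∈ invSet w ↔ p.1 < p.2 ∧ w p.2 < w p.1 := by
  simp [invSet]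

lemma pinv_one : pinv (1 : Equiv.Perm (Fin n)) = 0 := by
  simp only [pinv, Finset.card_eq_zero, invSet]
  ext p
  simp only [Finset.mem_filter, Finset.mem_univ, true_and, Finset.notMem_empty,
    iff_false, not_and, Equiv.Perm.one_apply]
  exact fun h => not_lt.2 (Finset.mem_filter.1 h).2.1.le (Finset.mem_filter.1 h).2.2

lemma eq_one_of_pinv_eq_zero {w : Equiv.Perm (Fin n)} (h : pinv w = 0) : w = 1 := by
  have hmono : StrictMono w := by
    intro a b hab
    rcases lt_trichotomy (w a) (w b) with h' | h' | h'
    · exact h'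
    · exact absurd (w.injective h') (ne_of_lt hab)
    · have hmem : ((a, b) : Fin n × Fin n) ∈ invSet w := mem_invSet.2 ⟨hab, h'⟩
      rw [Finset.card_eq_zero.1 h] at hmem
      exact absurd hmem (Finset.notMem_empty _)
  have := (StrictMono.range_inj hmono strictMono_id).1
    (by rw [Set.range_id]; exact Set.range_eq_univ.mpr w.surjective)
  ext x
  simp [this]

lemma pinv_inv (w : Equiv.Perm (Fin n)) : pinv w⁻¹ = pinv w := by
  unfold pinv
  apply Finset.card_bij' (fun p _ => (w⁻¹ p.2, w⁻¹ p.1)) (fun p _ => (w p.2, w p.1))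
  · intro p hp
    rw [mem_invSet] at hp ⊢
    refine ⟨hp.2, ?_⟩
    simpa using hp.1
  · intro p hp
    rw [mem_invSet] at hp ⊢
    refine ⟨hp.2, ?_⟩
    simpa using hp.1
  · intro p _; simp
  · intro p _; simp

def fmap (i j : Fin n) (p : Fin n × Fin n) : Fin n × Fin n :=
  if Equiv.swap i j p.1 < Equiv.swap i j p.2 then (Equiv.swap i j p.1, Equiv.swap i j p.2) else p

lemma fmap_invol {i j : Fin n} {p : Fin n × Fin n} (hp : p.1 < p.2) :
    fmap i j (fmap i j p) = p := by
  unfold fmap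
  by_cases h : Equiv.swap i j p.1 < Equiv.swap i j p.2
  · rw [if_pos h]
    simp only [Equiv.swap_apply_self]
    rw [if_pos hp]
  · rw [if_neg h, if_neg h]

lemma fmap_injOn {i j : Fin n} {s : Finset (Fin n × Fin n)}
    (hs : ∀ p ∈ s, p.1 < p.2) : Set.InjOn (fmap i j) s := by
  intro a ha b hb hab
  have := congrArg (fmap i j) hab
  rwa [fmap_invol (hs a ha), fmap_invol (hs b hb)] at this

lemma flip_cases {i j : Fin n} (hij : i < j) {p : Fin n × Fin n} (hp : p.1 < p.2)
    (h : ¬ Equiv.swap i j p.1 < Equiv.swap i j p.2) :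
    (p.1 = i ∧ i < p.2 ∧ p.2 ≤ j) ∨ (p.2 = j ∧ i ≤ p.1 ∧ p.1 < j) := by
  obtain ⟨a, b⟩ := p
  simp only at hp h ⊢
  have hne : a ≠ b := ne_of_lt hp
  have h' : Equiv.swap i j b < Equiv.swap i j a :=
    lt_of_le_of_ne (not_lt.1 h) fun hc => hne ((Equiv.swap i j).injective hc).symm
  by_cases h1i : a = i
  · subst h1i
    by_cases h2j : b = j
    · exact Or.inl ⟨rfl, hp, h2j.le⟩
    · have h2i : b ≠ a := hne.symm
      rw [Equiv.swap_apply_left, Equiv.swap_apply_of_ne_of_ne h2i h2j] at h'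
      exact Or.inl ⟨rfl, hp, h'.le⟩
  · by_cases h1j : a = j
    · subst h1j
      have h2i : b ≠ i := ne_of_gt (lt_trans hij hp)
      have h2j : b ≠ a := ne_of_gt hp
      rw [Equiv.swap_apply_right, Equiv.swap_apply_of_ne_of_ne h2i h2j] at h'
      exact absurd (lt_trans hij hp) (not_lt.2 h'.le)
    · rw [Equiv.swap_apply_of_ne_of_ne h1i h1j] at h'
      by_cases h2i : b = i
      · subst h2i
        rw [Equiv.swap_apply_left] at h'
        exact absurd (lt_trans hij h') (not_lt.2 hp.le)
      · by_cases h2j : b = j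
        · subst h2j
          rw [Equiv.swap_apply_right] at h'
          exact Or.inr ⟨rfl, h'.le, hp⟩
        · rw [Equiv.swap_apply_of_ne_of_ne h2i h2j] at h'
          exact absurd hp (not_lt.2 h'.le)

lemma mul_swap_apply (w : Equiv.Perm (Fin n)) (i j x : Fin n) :
    (w * Equiv.swap i j) x = w (Equiv.swap i j x) := rfl

lemma pinv_add_one_le {w : Equiv.Perm (Fin n)} {i j : Fin n} (hij : i < j) (hw : w i < w j) :
    pinv w + 1 ≤ pinv (w * Equiv.swap i j) := by
  have hijmem : (i, j) ∈ invSet (w * Equiv.swap i j) := by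
    rw [mem_invSet]
    refine ⟨hij, ?_⟩
    simpa [mul_swap_apply, Equiv.swap_apply_left, Equiv.swap_apply_right] using hw
  have hmaps : ∀ p ∈ invSet w, fmap i j p ∈ (invSet (w * Equiv.swap i j)).erase (i, j) := by
    intro p hp
    rw [mem_invSet] at hp
    obtain ⟨hp1, hp2⟩ := hp
    rw [Finset.mem_erase]
    by_cases hlt : Equiv.swap i j p.1 < Equiv.swap i j p.2
    · rw [fmap, if_pos hlt]
      constructor
      · intro hc
        have e1 : p.1 = j := by
          have := congrArg (Equiv.swap i j) (congrArg Prod.fst hc)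
          simpa [Equiv.swap_apply_self, Equiv.swap_apply_left] using this
        have e2 : p.2 = i := by
          have := congrArg (Equiv.swap i j) (congrArg Prod.snd hc)
          simpa [Equiv.swap_apply_self, Equiv.swap_apply_right] using this
        have : j < i := by rw [← e1, ← e2]; exact hp1
        exact absurd this (not_lt.2 hij.le)
      · rw [mem_invSet]
        refine ⟨hlt, ?_⟩
        simpa [mul_swap_apply, Equiv.swap_apply_self] using hp2
    · rw [fmap, if_neg hlt]
      rcases flip_cases hij hp1 hlt with ⟨h1, h2, h3⟩ | ⟨h1, h2, h3⟩
      · -- p.1 = i, i < p.2 ≤ j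
        have h2j : p.2 ≠ j := by
          intro hc
          rw [h1, hc] at hp2
          exact absurd hw (not_lt.2 hp2.le)
        have h2i : p.2 ≠ i := ne_of_gt h2
        constructor
        · intro hc
          exact h2j (congrArg Prod.snd hc)
        · rw [mem_invSet]
          refine ⟨hp1, ?_⟩
          rw [mul_swap_apply, mul_swap_apply, h1, Equiv.swap_apply_left,
            Equiv.swap_apply_of_ne_of_ne h2i h2j]
          exact lt_trans (h1 ▸ hp2) hw
      · -- p.2 = j, i ≤ p.1 < j
        have h1i : p.1 ≠ i := by
          intro hc
          rw [h1, hc] at hp2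
          exact absurd hw (not_lt.2 hp2.le)
        have h1j : p.1 ≠ j := ne_of_lt h3
        constructor
        · intro hc
          exact h1i (congrArg Prod.fst hc)
        · rw [mem_invSet]
          refine ⟨hp1, ?_⟩
          rw [mul_swap_apply, mul_swap_apply, h1, Equiv.swap_apply_right,
            Equiv.swap_apply_of_ne_of_ne h1i h1j]
          exact lt_trans hw (h1 ▸ hp2)
  have hcard : (invSet w).card ≤ ((invSet (w * Equiv.swap i j)).erase (i, j)).card :=
    Finset.card_le_card_of_injOn _ hmaps
      (fmap_injOn (fun p hp => (mem_invSet.1 hp).1))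
  rw [Finset.card_erase_of_mem hijmem] at hcard
  have hpos : 1 ≤ (invSet (w * Equiv.swap i j)).card := Finset.card_pos.2 ⟨_, hijmem⟩
  unfold pinv
  omega

/-- Adjacent transpositions change the inversion number by at most one. -/
lemma pinv_le_add_one {w : Equiv.Perm (Fin n)} {i j : Fin n} (hij : i < j)
    (hmid : ∀ x : Fin n, ¬(i < x ∧ x < j)) :
    pinv (w * Equiv.swap i j) ≤ pinv w + 1 := by
  have hmaps : ∀ p ∈ (invSet (w * Equiv.swap i j)).erase (i, j), fmap i j p ∈ invSet w := by
    intro p hp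
    rw [Finset.mem_erase, mem_invSet] at hp
    obtain ⟨hne, hp1, hp2⟩ := hp
    by_cases hlt : Equiv.swap i j p.1 < Equiv.swap i j p.2
    · rw [fmap, if_pos hlt, mem_invSet]
      refine ⟨hlt, ?_⟩
      have e2 : w (Equiv.swap i j p.2) = (w * Equiv.swap i j) p.2 := rfl
      have e1 : w (Equiv.swap i j p.1) = (w * Equiv.swap i j) p.1 := rfl
      rw [e1, e2]
      exact hp2
    · exfalso
      rcases flip_cases hij hp1 hlt with ⟨h1, h2, h3⟩ | ⟨h1, h2, h3⟩
      · rcases lt_or_eq_of_le h3 with h3' | h3'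
        · exact hmid p.2 ⟨h2, h3'⟩
        · exact hne (Prod.ext h1 h3')
      · rcases lt_or_eq_of_le h2 with h2' | h2'
        · exact hmid p.1 ⟨h2', h3⟩
        · exact hne (Prod.ext h2'.symm h1)
  have hcard := Finset.card_le_card_of_injOn _ hmaps
    (fmap_injOn (fun p hp => (mem_invSet.1 (Finset.mem_of_mem_erase hp)).1))
  have := Finset.pred_card_le_card_erase
    (s := invSet (w * Equiv.swap i j)) (a := ((i, j) : Fin n × Fin n))
  unfold pinv
  omega


lemma sTr_eq {i : ℕ} (h : i + 1 < n) :
    sTr n i = Equiv.swap ⟨i, Nat.lt_of_succ_lt h⟩ ⟨i + 1, h⟩ := dif_pos h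

lemma sTr_mul_self (i : ℕ) : sTr n i * sTr n i = 1 := by
  unfold sTr
  by_cases h : i + 1 < n
  · rw [dif_pos h, Equiv.swap_mul_self]
  · rw [dif_neg h, one_mul]

lemma fin_lt {i : ℕ} (h : i + 1 < n) :
    (⟨i, Nat.lt_of_succ_lt h⟩ : Fin n) < ⟨i + 1, h⟩ := by
  simp [Fin.lt_def]

lemma nomid {i : ℕ} (h : i + 1 < n) :
    ∀ x : Fin n, ¬((⟨i, Nat.lt_of_succ_lt h⟩ : Fin n) < x ∧ x < ⟨i + 1, h⟩) := by
  intro x hx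
  rw [Fin.lt_def, Fin.lt_def] at hx
  simp only at hx
  omega

lemma pinv_mul_sTr_asc {w : Equiv.Perm (Fin n)} {i : ℕ} (h : i + 1 < n)
    (hw : w ⟨i, Nat.lt_of_succ_lt h⟩ < w ⟨i + 1, h⟩) :
    pinv (w * sTr n i) = pinv w + 1 := by
  rw [sTr_eq h]
  exact le_antisymm (pinv_le_add_one (fin_lt h) (nomid h)) (pinv_add_one_le (fin_lt h) hw)

lemma pinv_mul_sTr_desc {w : Equiv.Perm (Fin n)} {i : ℕ} (h : i + 1 < n)
    (hw : w ⟨i + 1, h⟩ < w ⟨i, Nat.lt_of_succ_lt h⟩) :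
    pinv (w * sTr n i) + 1 = pinv w := by
  have h1 : (w * sTr n i) ⟨i, Nat.lt_of_succ_lt h⟩ = w ⟨i + 1, h⟩ := by
    rw [sTr_eq h, mul_swap_apply, Equiv.swap_apply_left]
  have h2 : (w * sTr n i) ⟨i + 1, h⟩ = w ⟨i, Nat.lt_of_succ_lt h⟩ := by
    rw [sTr_eq h, mul_swap_apply, Equiv.swap_apply_right]
  have := pinv_mul_sTr_asc h (w := w * sTr n i) (by rw [h1, h2]; exact hw)
  rw [mul_assoc, sTr_mul_self, mul_one] at this
  omega

lemma exists_descent {w : Equiv.Perm (Fin n)} (hw : w ≠ 1) :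
    ∃ i : ℕ, ∃ h : i + 1 < n, w ⟨i + 1, h⟩ < w ⟨i, Nat.lt_of_succ_lt h⟩ := by
  by_contra hcon
  push_neg at hcon
  apply hw
  have hmono : StrictMono w := by
    cases n with
    | zero => intro a; exact absurd a.2 (by omega)
    | succ m =>
      rw [Fin.strictMono_iff_lt_succ]
      intro i
      have h : (i : ℕ) + 1 < m + 1 := by omega
      have hle := hcon i h
      have hcast : Fin.castSucc i = (⟨(i : ℕ), Nat.lt_of_succ_lt h⟩ : Fin (m + 1)) := rfl
      have hsucc : Fin.succ i = (⟨(i : ℕ) + 1, h⟩ : Fin (m + 1)) := rfl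
      rw [hcast, hsucc]
      refine lt_of_le_of_ne hle ?_
      intro hc
      have := w.injective hc
      rw [Fin.ext_iff] at this
      simp at this
  have := (StrictMono.range_inj hmono strictMono_id).1
    (by rw [Set.range_id]; exact Set.range_eq_univ.mpr w.surjective)
  ext x
  simp [this]

lemma exists_list (w : Equiv.Perm (Fin n)) :
    ∃ l : List ℕ, l.length = pinv w ∧ (∀ i ∈ l, i + 1 < n) ∧ w = (l.map (sTr n)).prod := by
  suffices H : ∀ N (w : Equiv.Perm (Fin n)), pinv w = N →
      ∃ l : List ℕ, l.length = pinv w ∧ (∀ i ∈ l, i + 1 < n) ∧ w = (l.map (sTr n)).prod from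
    H (pinv w) w rfl
  intro N
  induction N using Nat.strong_induction_on with
  | _ N IH =>
    intro w hN
    by_cases hw : w = 1
    · subst hw
      exact ⟨[], by rw [pinv_one]; simp, by simp, by simp⟩
    · obtain ⟨i, h, hdesc⟩ := exists_descent hw
      have hp : pinv (w * sTr n i) + 1 = pinv w := pinv_mul_sTr_desc h hdesc
      obtain ⟨l, hl1, hl2, hl3⟩ := IH (pinv (w * sTr n i)) (by omega) _ rfl
      refine ⟨l ++ [i], ?_, ?_, ?_⟩
      · simp [hl1]; omega
      · intro x hx
        rcases List.mem_append.1 hx with hx | hx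
        · exact hl2 x hx
        · rw [List.mem_singleton.1 hx]; exact h
      · rw [List.map_append, List.prod_append]
        simp only [List.map_singleton, List.prod_singleton]
        rw [← hl3]
        rw [mul_assoc, sTr_mul_self, mul_one]
  

lemma pinv_prod_le (l : List ℕ) : pinv ((l.map (sTr n)).prod) ≤ l.length := by
  induction l with
  | nil => simp [pinv_one]
  | cons i l IH =>
    rw [List.map_cons, List.prod_cons]
    have key : ∀ u : Equiv.Perm (Fin n), pinv (sTr n i * u) ≤ pinv u + 1 := by
      intro u
      by_cases h : i + 1 < n
      · have : (sTr n i * u)⁻¹ = u⁻¹ * sTr n i := by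
          rw [mul_inv_rev]
          congr 1
          rw [sTr_eq h, Equiv.swap_inv]
        calc pinv (sTr n i * u) = pinv (u⁻¹ * sTr n i) := by rw [← pinv_inv (sTr n i * u), this]
        _ ≤ pinv u⁻¹ + 1 := by rw [sTr_eq h]; exact pinv_le_add_one (fin_lt h) (nomid h)
        _ = pinv u + 1 := by rw [pinv_inv]
      · unfold sTr
        rw [dif_neg h, one_mul]
        omega
    calc pinv (sTr n i * (l.map (sTr n)).prod) ≤ pinv ((l.map (sTr n)).prod) + 1 := key _
    _ ≤ l.length + 1 := by omega
    _ = (i :: l).length := by simp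

lemma len_eq_pinv (w : Equiv.Perm (Fin n)) : len n w = pinv w := by
  obtain ⟨l, hl1, hl2, hl3⟩ := exists_list w
  apply le_antisymm
  · exact Nat.sInf_le ⟨l, hl1, hl2, hl3⟩
  · have hne : {k | ∃ l : List ℕ, l.length = k ∧ (∀ i ∈ l, i + 1 < n) ∧
        w = (l.map (sTr n)).prod}.Nonempty := ⟨pinv w, l, hl1, hl2, hl3⟩
    obtain ⟨l', h1, h2, h3⟩ := Nat.sInf_mem hne
    rw [len, ← h1, h3]
    exact pinv_prod_le l'

lemma len_one : len n (1 : Equiv.Perm (Fin n)) = 0 := by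
  rw [len_eq_pinv, pinv_one]

lemma len_eq_zero_iff {w : Equiv.Perm (Fin n)} : len n w = 0 ↔ w = 1 := by
  rw [len_eq_pinv]
  exact ⟨eq_one_of_pinv_eq_zero, fun h => h ▸ pinv_one⟩

lemma len_inv (w : Equiv.Perm (Fin n)) : len n w⁻¹ = len n w := by
  rw [len_eq_pinv, len_eq_pinv, pinv_inv]

lemma len_mul_sTr_asc {w : Equiv.Perm (Fin n)} {i : ℕ} (h : i + 1 < n)
    (hw : w ⟨i, Nat.lt_of_succ_lt h⟩ < w ⟨i + 1, h⟩) :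
    len n (w * sTr n i) = len n w + 1 := by
  rw [len_eq_pinv, len_eq_pinv]
  exact pinv_mul_sTr_asc h hw

lemma len_mul_sTr_desc {w : Equiv.Perm (Fin n)} {i : ℕ} (h : i + 1 < n)
    (hw : w ⟨i + 1, h⟩ < w ⟨i, Nat.lt_of_succ_lt h⟩) :
    len n (w * sTr n i) + 1 = len n w := by
  rw [len_eq_pinv, len_eq_pinv]
  exact pinv_mul_sTr_desc h hw

lemma len_mul_sTr_cases (w : Equiv.Perm (Fin n)) {i : ℕ} (h : i + 1 < n) :
    len n (w * sTr n i) = len n w + 1 ∨ len n (w * sTr n i) + 1 = len n w := by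
  rcases lt_or_ge (w ⟨i, Nat.lt_of_succ_lt h⟩) (w ⟨i + 1, h⟩) with hlt | hle
  · exact Or.inl (len_mul_sTr_asc h hlt)
  · have hne : w ⟨i + 1, h⟩ ≠ w ⟨i, Nat.lt_of_succ_lt h⟩ := by
      intro hc
      have := w.injective hc
      rw [Fin.ext_iff] at this
      simp at this
    exact Or.inr (len_mul_sTr_desc h (lt_of_le_of_ne hle hne))

lemma exists_descent_len {w : Equiv.Perm (Fin n)} (hw : w ≠ 1) :
    ∃ i : ℕ, i + 1 < n ∧ len n (w * sTr n i) + 1 = len n w := by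
  obtain ⟨i, h, hdesc⟩ := exists_descent hw
  exact ⟨i, h, len_mul_sTr_desc h hdesc⟩

lemma apply_lt_iff_len_lt {w : Equiv.Perm (Fin n)} {u v : Fin n} (huv : u < v) :
    w u < w v ↔ len n w < len n (w * Equiv.swap u v) := by
  constructor
  · intro hw
    rw [len_eq_pinv, len_eq_pinv]
    have := pinv_add_one_le huv hw
    omega
  · intro hlen
    by_contra hc
    push_neg at hc
    have hne : w v ≠ w u := fun hc' => (ne_of_lt huv).symm (w.injective hc')
    have hvu : w v < w u := lt_of_le_of_ne hc hne
    have h1 : (w * Equiv.swap u v) u = w v := by rw [mul_swap_apply, Equiv.swap_apply_left]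
    have h2 : (w * Equiv.swap u v) v = w u := by rw [mul_swap_apply, Equiv.swap_apply_right]
    have := pinv_add_one_le huv (w := w * Equiv.swap u v) (by rw [h1, h2]; exact hvu)
    rw [mul_assoc, Equiv.swap_mul_self, mul_one] at this
    rw [len_eq_pinv, len_eq_pinv] at hlen
    omega

/-! ### Rank matrices and the Bruhat order -/

def rkSet (w : Equiv.Perm (Fin n)) (a k : ℕ) : Finset (Fin n) :=
  Finset.univ.filter fun j => (j : ℕ) < a ∧ k ≤ (w j : ℕ)

def rk (w : Equiv.Perm (Fin n)) (a k : ℕ) : ℕ := (rkSet w a k).card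

lemma mem_rkSet {w : Equiv.Perm (Fin n)} {a k : ℕ} {j : Fin n} :
    j ∈ rkSet w a k ↔ (j : ℕ) < a ∧ k ≤ (w j : ℕ) := by
  simp [rkSet]

lemma rk_mul_swap_eq {w : Equiv.Perm (Fin n)} {i j : Fin n} (hij : i < j) {a : ℕ}
    (ha : ¬((i : ℕ) < a ∧ a ≤ (j : ℕ))) (k : ℕ) :
    rk (w * Equiv.swap i j) a k = rk w a k := by
  unfold rk
  apply Finset.card_bij' (fun x _ => Equiv.swap i j x) (fun x _ => Equiv.swap i j x)
  · intro x hx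
    rw [mem_rkSet] at hx ⊢
    obtain ⟨hx1, hx2⟩ := hx
    constructor
    · by_cases hxi : x = i
      · subst hxi
        rw [Equiv.swap_apply_left]
        rcases not_and_or.1 ha with h | h
        · exact absurd hx1 h
        · exact not_le.1 h
      · by_cases hxj : x = j
        · subst hxj
          rw [Equiv.swap_apply_right]
          exact lt_trans (by exact_mod_cast hij) hx1
        · rw [Equiv.swap_apply_of_ne_of_ne hxi hxj]; exact hx1
    · exact hx2
  · intro x hx
    rw [mem_rkSet] at hx ⊢
    obtain ⟨hx1, hx2⟩ := hx
    constructor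
    · by_cases hxi : x = i
      · subst hxi
        rw [Equiv.swap_apply_left]
        rcases not_and_or.1 ha with h | h
        · exact absurd hx1 h
        · exact not_le.1 h
      · by_cases hxj : x = j
        · subst hxj
          rw [Equiv.swap_apply_right]
          exact lt_trans (by exact_mod_cast hij) hx1
        · rw [Equiv.swap_apply_of_ne_of_ne hxi hxj]; exact hx1
    · have : (w * Equiv.swap i j) (Equiv.swap i j x) = w x := by
        rw [mul_swap_apply, Equiv.swap_apply_self]
      rw [this]
      exact hx2
  · intro x _; rw [Equiv.swap_apply_self]
  · intro x _; rw [Equiv.swap_apply_self]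

lemma rk_le_mul_swap {w : Equiv.Perm (Fin n)} {i j : Fin n} (hij : i < j) (hw : w i < w j)
    (a k : ℕ) : rk w a k ≤ rk (w * Equiv.swap i j) a k := by
  by_cases hmid : (i : ℕ) < a ∧ a ≤ (j : ℕ)
  · apply Finset.card_le_card
    intro x hx
    rw [mem_rkSet] at hx ⊢
    obtain ⟨hx1, hx2⟩ := hx
    refine ⟨hx1, ?_⟩
    have hxj : x ≠ j := by
      intro hc
      subst hc
      exact absurd (lt_of_lt_of_le hx1 hmid.2) (lt_irrefl _)
    by_cases hxi : x = i
    · subst hxi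
      rw [mul_swap_apply, Equiv.swap_apply_left]
      exact le_trans hx2 (le_of_lt (by exact_mod_cast hw))
    · rw [mul_swap_apply, Equiv.swap_apply_of_ne_of_ne hxi hxj]
      exact hx2
  · rw [rk_mul_swap_eq hij hmid]

lemma bruhat_step_rk {a b : Equiv.Perm (Fin n)}
    (hstep : ∃ u v : Fin n, u ≠ v ∧ b = a * Equiv.swap u v) (hlen : len n a < len n b) :
    ∀ x k, rk a x k ≤ rk b x k := by
  obtain ⟨u, v, huv, rfl⟩ := hstep
  intro x k
  rcases lt_or_gt_of_ne huv with h | h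
  · have hval : a u < a v := (apply_lt_iff_len_lt h).2 hlen
    exact rk_le_mul_swap h hval x k
  · rw [Equiv.swap_comm] at hlen ⊢
    have hval : a v < a u := (apply_lt_iff_len_lt h).2 hlen
    exact rk_le_mul_swap h hval x k

lemma bruhat_len_lt {y z : Equiv.Perm (Fin n)} (h : bruhatLT n y z) : len n y < len n z := by
  induction h with
  | single h => exact h.2
  | tail _ h IH => exact lt_trans IH h.2

lemma bruhat_rk_le {y z : Equiv.Perm (Fin n)} (h : bruhatLT n y z) :
    ∀ x k, rk y x k ≤ rk z x k := by
  induction h with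
  | single h => exact bruhat_step_rk h.1 h.2
  | tail _ h IH => exact fun x k => le_trans (IH x k) (bruhat_step_rk h.1 h.2 x k)

lemma rk_succ (w : Equiv.Perm (Fin n)) (j : Fin n) (k : ℕ) :
    rk w ((j : ℕ) + 1) k = rk w (j : ℕ) k + if k ≤ (w j : ℕ) then 1 else 0 := by
  unfold rk
  have hset : rkSet w ((j : ℕ) + 1) k =
      if k ≤ (w j : ℕ) then insert j (rkSet w (j : ℕ) k) else rkSet w (j : ℕ) k := by
    by_cases hk : k ≤ (w j : ℕ)
    · rw [if_pos hk]
      ext x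
      rw [mem_rkSet, Finset.mem_insert, mem_rkSet]
      constructor
      · rintro ⟨hx1, hx2⟩
        rcases Nat.lt_succ_iff_lt_or_eq.1 hx1 with h | h
        · exact Or.inr ⟨h, hx2⟩
        · exact Or.inl (Fin.ext h)
      · rintro (rfl | ⟨hx1, hx2⟩)
        · exact ⟨Nat.lt_succ_self _, hk⟩
        · exact ⟨Nat.lt_succ_of_lt hx1, hx2⟩
    · rw [if_neg hk]
      ext x
      rw [mem_rkSet, mem_rkSet]
      constructor
      · rintro ⟨hx1, hx2⟩
        rcases Nat.lt_succ_iff_lt_or_eq.1 hx1 with h | h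
        · exact ⟨h, hx2⟩
        · exact absurd hx2 (Fin.ext h ▸ hk)
      · rintro ⟨hx1, hx2⟩
        exact ⟨Nat.lt_succ_of_lt hx1, hx2⟩
  rw [hset]
  by_cases hk : k ≤ (w j : ℕ)
  · rw [if_pos hk, if_pos hk, Finset.card_insert_of_notMem]
    intro hc
    exact absurd (mem_rkSet.1 hc).1 (lt_irrefl _)
  · rw [if_neg hk, if_neg hk, Nat.add_zero]

lemma eq_of_rk_eq {y w : Equiv.Perm (Fin n)} (h : ∀ a k, rk y a k = rk w a k) : y = w := by
  apply Equiv.ext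
  intro j
  have hk : ∀ k, k ≤ (y j : ℕ) ↔ k ≤ (w j : ℕ) := by
    intro k
    have h1 := rk_succ y j k
    have h2 := rk_succ w j k
    rw [h (↑j + 1) k, h (↑j) k] at h1
    rw [h1] at h2
    by_cases hy : k ≤ (y j : ℕ) <;> by_cases hw' : k ≤ (w j : ℕ) <;>
      simp [hy, hw'] at h2 ⊢
  have h1 : (y j : ℕ) ≤ (w j : ℕ) := (hk (y j : ℕ)).1 le_rfl
  have h2 : (w j : ℕ) ≤ (y j : ℕ) := (hk (w j : ℕ)).2 le_rfl
  exact Fin.ext (le_antisymm h1 h2)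

lemma rk_big_k {w : Equiv.Perm (Fin n)} {a k : ℕ} (hk : n ≤ k) : rk w a k = 0 := by
  rw [rk, Finset.card_eq_zero]
  ext j
  rw [mem_rkSet]
  simp only [Finset.notMem_empty, iff_false, not_and]
  intro _
  exact not_le.2 (lt_of_lt_of_le (w j).2 hk)

lemma rk_big_a {w : Equiv.Perm (Fin n)} {a k : ℕ} (ha : n ≤ a) : rk w a k = rk w n k := by
  unfold rk
  congr 1
  ext j
  rw [mem_rkSet, mem_rkSet]
  have := j.2
  constructor
  · rintro ⟨_, h2⟩; exact ⟨j.2, h2⟩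
  · rintro ⟨_, h2⟩; exact ⟨lt_of_lt_of_le j.2 ha, h2⟩

def Msum (w : Equiv.Perm (Fin n)) : ℕ :=
  ∑ a ∈ Finset.range (n + 1), ∑ k ∈ Finset.range n, rk w a k

lemma Msum_lt {y w : Equiv.Perm (Fin n)} (hle : ∀ a k, rk y a k ≤ rk w a k) (hne : y ≠ w) :
    Msum y < Msum w := by
  have hex : ∃ a ∈ Finset.range (n + 1), ∃ k ∈ Finset.range n, rk y a k < rk w a k := by
    by_contra hcon
    push_neg at hcon
    apply hne
    apply eq_of_rk_eq
    intro a k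
    by_cases hk : k < n
    · by_cases ha : a ≤ n
      · exact le_antisymm (hle a k) (hcon a (Finset.mem_range.2 (by omega)) k
          (Finset.mem_range.2 hk))
      · rw [rk_big_a (le_of_not_ge ha), rk_big_a (w := w) (le_of_not_ge ha)]
        exact le_antisymm (hle n k) (hcon n (Finset.mem_range.2 (by omega)) k
          (Finset.mem_range.2 hk))
    · rw [rk_big_k (not_lt.1 hk), rk_big_k (not_lt.1 hk)]
  obtain ⟨a, ha, k, hk, hlt⟩ := hex
  apply Finset.sum_lt_sum
  · intro x _
    exact Finset.sum_le_sum fun m _ => hle x m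
  · exact ⟨a, ha, Finset.sum_lt_sum (fun m _ => hle a m) ⟨k, hk, hlt⟩⟩

/-- Splitting the rank count at a second threshold. -/
lemma rk_split (u : Equiv.Perm (Fin n)) (a : ℕ) {k K : ℕ} (hkK : k ≤ K) :
    rk u a k = rk u a K +
      (Finset.univ.filter fun j : Fin n => (j : ℕ) < a ∧ k ≤ (u j : ℕ) ∧ (u j : ℕ) < K).card := by
  unfold rk
  rw [← Finset.card_union_of_disjoint]
  · congr 1
    ext j
    rw [Finset.mem_union, mem_rkSet, Finset.mem_filter, mem_rkSet]
    constructor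
    · rintro ⟨h1, h2⟩
      by_cases hK : K ≤ (u j : ℕ)
      · exact Or.inl ⟨h1, hK⟩
      · exact Or.inr ⟨Finset.mem_univ _, h1, h2, not_le.1 hK⟩
    · rintro (⟨h1, h2⟩ | ⟨_, h1, h2, h3⟩)
      · exact ⟨h1, le_trans hkK h2⟩
      · exact ⟨h1, h2⟩
  · rw [Finset.disjoint_left]
    intro j hj hj'
    rw [mem_rkSet] at hj
    rw [Finset.mem_filter] at hj'
    exact absurd hj.2 (not_le.2 hj'.2.2.2)

lemma Msum_le {y w : Equiv.Perm (Fin n)} (h : ∀ a k, rk y a k ≤ rk w a k) :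
    Msum y ≤ Msum w :=
  Finset.sum_le_sum fun a _ => Finset.sum_le_sum fun k _ => h a k

lemma bruhat_of_rk_le (y w : Equiv.Perm (Fin n))
    (hle : ∀ a k, rk y a k ≤ rk w a k) (hne : y ≠ w) : bruhatLT n y w := by
  suffices H : ∀ N (y : Equiv.Perm (Fin n)), Msum w - Msum y = N →
      (∀ a k, rk y a k ≤ rk w a k) → y ≠ w → bruhatLT n y w from H _ y rfl hle hne
  intro N
  induction N using Nat.strong_induction_on with
  | _ N IH =>
  intro y hN hle hne
  -- the first position where y and w differ
  have hsne : (Finset.univ.filter fun j : Fin n => y j ≠ w j).Nonempty := by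
    by_contra hc
    rw [Finset.not_nonempty_iff_eq_empty] at hc
    apply hne
    apply Equiv.ext
    intro j
    by_contra hj
    have : j ∈ Finset.univ.filter fun j : Fin n => y j ≠ w j :=
      Finset.mem_filter.2 ⟨Finset.mem_univ _, hj⟩
    rw [hc] at this
    exact absurd this (Finset.notMem_empty _)
  set p := (Finset.univ.filter fun j : Fin n => y j ≠ w j).min' hsne with hp
  have hpmem : y p ≠ w p := by
    have := Finset.min'_mem _ hsne
    rw [Finset.mem_filter] at this
    exact this.2
  have hprefix : ∀ j : Fin n, j < p → y j = w j := by
    intro j hj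
    by_contra hc
    exact absurd (Finset.min'_le _ j (Finset.mem_filter.2 ⟨Finset.mem_univ _, hc⟩))
      (not_le.2 hj)
  have hrk_prefix : ∀ k, rk y (p : ℕ) k = rk w (p : ℕ) k := by
    intro k
    unfold rk
    congr 1
    ext j
    rw [mem_rkSet, mem_rkSet]
    constructor
    · rintro ⟨h1, h2⟩
      exact ⟨h1, by rwa [← hprefix j (Fin.lt_def.2 h1)]⟩
    · rintro ⟨h1, h2⟩
      exact ⟨h1, by rwa [hprefix j (Fin.lt_def.2 h1)]⟩
  have hyp_lt : (y p : ℕ) < (w p : ℕ) := by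
    have h1 := rk_succ y p (y p : ℕ)
    have h2 := rk_succ w p (y p : ℕ)
    have h3 := hle ((p : ℕ) + 1) (y p : ℕ)
    rw [h1, h2, hrk_prefix] at h3
    have hyle : (y p : ℕ) ≤ (w p : ℕ) := by
      by_contra hc
      rw [if_pos le_rfl, if_neg hc] at h3
      omega
    refine lt_of_le_of_ne hyle ?_
    intro hc
    exact hpmem (Fin.ext hc)
  -- the position q to swap with
  have hqne : (Finset.univ.filter fun j : Fin n =>
      p < j ∧ (y p : ℕ) < (y j : ℕ) ∧ (y j : ℕ) ≤ (w p : ℕ)).Nonempty := by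
    refine ⟨y⁻¹ (w p), Finset.mem_filter.2 ⟨Finset.mem_univ _, ?_, ?_, ?_⟩⟩
    · rcases lt_trichotomy (y⁻¹ (w p)) p with h | h | h
      · exfalso
        have := hprefix _ h
        rw [perm_apply_inv_self] at this
        exact absurd (w.injective this.symm) (ne_of_lt h)
      · exfalso
        have he := perm_apply_inv_self y (w p)
        rw [h] at he
        exact hpmem he
      · exact h
    · rw [perm_apply_inv_self]; exact hyp_lt
    · rw [perm_apply_inv_self]
  set q := (Finset.univ.filter fun j : Fin n =>
      p < j ∧ (y p : ℕ) < (y j : ℕ) ∧ (y j : ℕ) ≤ (w p : ℕ)).min' hqne with hq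
  have hqmem : p < q ∧ (y p : ℕ) < (y q : ℕ) ∧ (y q : ℕ) ≤ (w p : ℕ) := by
    have := Finset.min'_mem _ hqne
    rw [Finset.mem_filter] at this
    exact this.2
  have hqmin : ∀ j : Fin n, p < j → (y p : ℕ) < (y j : ℕ) → (y j : ℕ) ≤ (w p : ℕ) → q ≤ j := by
    intro j h1 h2 h3
    exact Finset.min'_le _ j (Finset.mem_filter.2 ⟨Finset.mem_univ _, h1, h2, h3⟩)
  obtain ⟨hpq, hyq, hqwp⟩ := hqmem
  have hvalfin : y p < y q := Fin.lt_def.2 hyq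
  have hstep_len : len n y < len n (y * Equiv.swap p q) := (apply_lt_iff_len_lt hpq).1 hvalfin
  have hstep : (∃ u v : Fin n, u ≠ v ∧ y * Equiv.swap p q = y * Equiv.swap u v) ∧
      len n y < len n (y * Equiv.swap p q) := ⟨⟨p, q, ne_of_lt hpq, rfl⟩, hstep_len⟩
  -- the new permutation still lies below w in the rank order
  have hle' : ∀ a k, rk (y * Equiv.swap p q) a k ≤ rk w a k := by
    intro a k
    by_cases hmid : (p : ℕ) < a ∧ a ≤ (q : ℕ)
    · have happ : ∀ x : Fin n, x ≠ p → x ≠ q →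
          ((y * Equiv.swap p q) x : Fin n) = y x := by
        intro x h1 h2
        rw [mul_swap_apply, Equiv.swap_apply_of_ne_of_ne h1 h2]
      have happ_p : (y * Equiv.swap p q) p = y q := by
        rw [mul_swap_apply, Equiv.swap_apply_left]
      by_cases hkp : k ≤ (y p : ℕ)
      · have heq : rk (y * Equiv.swap p q) a k = rk y a k := by
          unfold rk
          congr 1
          ext x
          rw [mem_rkSet, mem_rkSet]
          by_cases hxq : x = q
          · subst hxq
            constructor
            · rintro ⟨h1, _⟩; exact absurd (lt_of_lt_of_le h1 hmid.2) (lt_irrefl _)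
            · rintro ⟨h1, _⟩; exact absurd (lt_of_lt_of_le h1 hmid.2) (lt_irrefl _)
          · by_cases hxp : x = p
            · subst hxp
              rw [happ_p]
              constructor
              · rintro ⟨h1, _⟩; exact ⟨h1, hkp⟩
              · rintro ⟨h1, _⟩; exact ⟨h1, le_trans hkp hyq.le⟩
            · rw [happ x hxp hxq]
        rw [heq]; exact hle a k
      · by_cases hkq : k ≤ (y q : ℕ)
        · -- the main case
          have heq : rk (y * Equiv.swap p q) a k = rk y a k + 1 := by
            unfold rk
            have hpnot : p ∉ rkSet y a k := by
              rw [mem_rkSet]; rintro ⟨_, h2⟩; exact hkp h2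
            have hins : rkSet (y * Equiv.swap p q) a k = insert p (rkSet y a k) := by
              ext x
              rw [mem_rkSet, Finset.mem_insert, mem_rkSet]
              by_cases hxq : x = q
              · subst hxq
                constructor
                · rintro ⟨h1, _⟩; exact absurd (lt_of_lt_of_le h1 hmid.2) (lt_irrefl _)
                · rintro (hc | ⟨h1, _⟩)
                  · exact absurd (hc ▸ hpq) (lt_irrefl _)
                  · exact absurd (lt_of_lt_of_le h1 hmid.2) (lt_irrefl _)
              · by_cases hxp : x = p
                · subst hxp
                  rw [happ_p]
                  simp only [true_or, iff_true]
                  exact ⟨hmid.1, hkq⟩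
                · rw [happ x hxp hxq]
                  simp only [hxp, false_or]
            rw [hins, Finset.card_insert_of_notMem hpnot]
          rw [heq]
          -- now the threshold-shifting estimate
          set K := (w p : ℕ) + 1 with hK
          have hkK : k ≤ K := by omega
          have hsp1 := rk_split y a hkK
          have hsp2 := rk_split w a hkK
          set Ay := Finset.univ.filter
            fun j : Fin n => (j : ℕ) < a ∧ k ≤ (y j : ℕ) ∧ (y j : ℕ) < K with hAy
          set Aw := Finset.univ.filter
            fun j : Fin n => (j : ℕ) < a ∧ k ≤ (w j : ℕ) ∧ (w j : ℕ) < K with hAw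
          set Bw := Finset.univ.filter
            fun j : Fin n => (j : ℕ) < (p : ℕ) ∧ k ≤ (w j : ℕ) ∧ (w j : ℕ) < K with hBw
          have hAyBw : Ay ⊆ Bw := by
            intro x hx
            rw [hAy, Finset.mem_filter] at hx
            obtain ⟨_, h1, h2, h3⟩ := hx
            rcases lt_trichotomy x p with hxp | hxp | hxp
            · rw [hBw, Finset.mem_filter]
              exact ⟨Finset.mem_univ _, Fin.lt_def.1 hxp,
                by rwa [← hprefix x hxp], by rwa [← hprefix x hxp]⟩
            · exfalso; subst hxp; exact hkp h2
            · exfalso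
              have := hqmin x hxp (by omega) (by omega)
              have : (q : ℕ) ≤ (x : ℕ) := this
              omega
          have hBwAw : insert p Bw ⊆ Aw := by
            intro x hx
            rcases Finset.mem_insert.1 hx with rfl | hx
            · rw [hAw, Finset.mem_filter]
              exact ⟨Finset.mem_univ _, hmid.1, by omega, by omega⟩
            · rw [hBw, Finset.mem_filter] at hx
              rw [hAw, Finset.mem_filter]
              exact ⟨Finset.mem_univ _, by have := hmid.1; omega, hx.2.2⟩
          have hpBw : p ∉ Bw := by
            rw [hBw, Finset.mem_filter]
            rintro ⟨_, hc, _⟩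
            omega
          have hc1 : Ay.card ≤ Bw.card := Finset.card_le_card hAyBw
          have hc2 : Bw.card + 1 ≤ Aw.card := by
            have := Finset.card_le_card hBwAw
            rwa [Finset.card_insert_of_notMem hpBw] at this
          have hc3 : rk y a K ≤ rk w a K := hle a K
          omega
        · -- k is bigger than both values: the sets agree
          have heq : rk (y * Equiv.swap p q) a k = rk y a k := by
            unfold rk
            congr 1
            ext x
            rw [mem_rkSet, mem_rkSet]
            by_cases hxq : x = q
            · subst hxq
              constructor
              · rintro ⟨h1, _⟩; exact absurd (lt_of_lt_of_le h1 hmid.2) (lt_irrefl _)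
              · rintro ⟨h1, _⟩; exact absurd (lt_of_lt_of_le h1 hmid.2) (lt_irrefl _)
            · by_cases hxp : x = p
              · subst hxp
                rw [happ_p]
                constructor
                · rintro ⟨_, h2⟩; exact absurd h2 hkq
                · rintro ⟨_, h2⟩; exact absurd h2 (by omega)
              · rw [happ x hxp hxq]
          rw [heq]; exact hle a k
    · rw [rk_mul_swap_eq hpq hmid k]
      exact hle a k
  have hyne : y ≠ y * Equiv.swap p q := by
    intro hc
    rw [← hc] at hstep_len
    exact absurd hstep_len (lt_irrefl _)
  have hMlt : Msum y < Msum (y * Equiv.swap p q) :=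
    Msum_lt (bruhat_step_rk hstep.1 hstep.2) hyne
  by_cases hfin : y * Equiv.swap p q = w
  · exact Relation.TransGen.single (hfin ▸ hstep)
  · have hMle : Msum (y * Equiv.swap p q) ≤ Msum w := Msum_le hle'
    exact Relation.TransGen.head hstep
      (IH (Msum w - Msum (y * Equiv.swap p q)) (by omega) _ rfl hle' hfin)

lemma bruhat_iff {y w : Equiv.Perm (Fin n)} :
    bruhatLT n y w ↔ (∀ a k, rk y a k ≤ rk w a k) ∧ y ≠ w := by
  constructor
  · intro h
    refine ⟨bruhat_rk_le h, ?_⟩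
    intro hc
    exact absurd (hc ▸ bruhat_len_lt h) (lt_irrefl _)
  · rintro ⟨h1, h2⟩
    exact bruhat_of_rk_le y w h1 h2

lemma bruhat_step_sTr {v : Equiv.Perm (Fin n)} {i : ℕ} (h : i + 1 < n)
    (hasc : len n (v * sTr n i) = len n v + 1) : bruhatLT n v (v * sTr n i) :=
  Relation.TransGen.single ⟨⟨_, _, ne_of_lt (fin_lt h), by rw [sTr_eq h]⟩, by omega⟩

lemma rk_swap_adj (u : Equiv.Perm (Fin n)) {i : ℕ} (h : i + 1 < n) (k : ℕ) :
    rk (u * sTr n i) (i + 1) k =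
      rk u i k + if k ≤ (u ⟨i + 1, h⟩ : ℕ) then 1 else 0 := by
  have happ : ∀ x : Fin n, x ≠ ⟨i, Nat.lt_of_succ_lt h⟩ → x ≠ ⟨i + 1, h⟩ →
      (u * sTr n i) x = u x := by
    intro x h1 h2
    rw [sTr_eq h, mul_swap_apply, Equiv.swap_apply_of_ne_of_ne h1 h2]
  have happ_p : (u * sTr n i) ⟨i, Nat.lt_of_succ_lt h⟩ = u ⟨i + 1, h⟩ := by
    rw [sTr_eq h, mul_swap_apply, Equiv.swap_apply_left]
  unfold rk
  have hset : rkSet (u * sTr n i) (i + 1) k =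
      if k ≤ (u ⟨i + 1, h⟩ : ℕ) then insert (⟨i, Nat.lt_of_succ_lt h⟩ : Fin n) (rkSet u i k)
      else rkSet u i k := by
    by_cases hk : k ≤ (u ⟨i + 1, h⟩ : ℕ)
    · rw [if_pos hk]
      ext x
      rw [mem_rkSet, Finset.mem_insert, mem_rkSet]
      constructor
      · rintro ⟨h1, h2⟩
        by_cases hxp : x = ⟨i, Nat.lt_of_succ_lt h⟩
        · exact Or.inl hxp
        · have hxval : (x : ℕ) ≠ i := fun hc => hxp (Fin.ext hc)
          have hxp' : x ≠ ⟨i + 1, h⟩ := by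
            intro hc
            rw [hc] at h1
            exact absurd h1 (lt_irrefl _)
          rw [happ x hxp hxp'] at h2
          exact Or.inr ⟨by omega, h2⟩
      · rintro (rfl | ⟨h1, h2⟩)
        · exact ⟨by simp, by rwa [happ_p]⟩
        · have hxp : x ≠ ⟨i, Nat.lt_of_succ_lt h⟩ := by
            intro hc
            rw [hc] at h1
            exact absurd h1 (lt_irrefl _)
          have hxp' : x ≠ ⟨i + 1, h⟩ := by
            intro hc
            rw [hc] at h1
            simp only at h1
            omega
          exact ⟨by omega, by rwa [happ x hxp hxp']⟩
    · rw [if_neg hk]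
      ext x
      rw [mem_rkSet, mem_rkSet]
      constructor
      · rintro ⟨h1, h2⟩
        by_cases hxp : x = ⟨i, Nat.lt_of_succ_lt h⟩
        · rw [hxp, happ_p] at h2
          exact absurd h2 hk
        · have hxval : (x : ℕ) ≠ i := fun hc => hxp (Fin.ext hc)
          have hxp' : x ≠ ⟨i + 1, h⟩ := by
            intro hc
            rw [hc] at h1
            exact absurd h1 (lt_irrefl _)
          rw [happ x hxp hxp'] at h2
          exact ⟨by omega, h2⟩
      · rintro ⟨h1, h2⟩
        have hxp : x ≠ ⟨i, Nat.lt_of_succ_lt h⟩ := by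
          intro hc
          rw [hc] at h1
          exact absurd h1 (lt_irrefl _)
        have hxp' : x ≠ ⟨i + 1, h⟩ := by
          intro hc
          rw [hc] at h1
          simp only at h1
          omega
        exact ⟨by omega, by rwa [happ x hxp hxp']⟩
  rw [hset]
  by_cases hk : k ≤ (u ⟨i + 1, h⟩ : ℕ)
  · rw [if_pos hk, if_pos hk, Finset.card_insert_of_notMem]
    intro hc
    have := (mem_rkSet.1 hc).1
    simp at this
  · rw [if_neg hk, if_neg hk, Nat.add_zero]

lemma len_mul_sTr_le (w : Equiv.Perm (Fin n)) (i : ℕ) :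
    len n (w * sTr n i) ≤ len n w + 1 := by
  by_cases h : i + 1 < n
  · rcases len_mul_sTr_cases w h with h' | h' <;> omega
  · rw [sTr, dif_neg h, mul_one]
    omega

lemma bruhat_lift {y v : Equiv.Perm (Fin n)} {i : ℕ} (h : i + 1 < n)
    (hyv : bruhatLT n y v) (hasc : len n (v * sTr n i) = len n v + 1) :
    bruhatLT n (y * sTr n i) (v * sTr n i) := by
  have hr := bruhat_rk_le hyv
  have hlen := bruhat_len_lt hyv
  have hvv : (v ⟨i, Nat.lt_of_succ_lt h⟩ : ℕ) < (v ⟨i + 1, h⟩ : ℕ) := by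
    have := (apply_lt_iff_len_lt (w := v) (fin_lt h)).2
      (by rw [← sTr_eq h]; omega)
    exact Fin.lt_def.1 this
  apply bruhat_of_rk_le (y * sTr n i) (v * sTr n i)
  · intro a k
    by_cases hmid : i < a ∧ a ≤ i + 1
    · have ha : a = i + 1 := by omega
      subst ha
      rw [rk_swap_adj y h k, rk_swap_adj v h k]
      by_cases hky : k ≤ (y ⟨i + 1, h⟩ : ℕ)
      · by_cases hkv : k ≤ (v ⟨i + 1, h⟩ : ℕ)
        · rw [if_pos hky, if_pos hkv]
          have := hr i k
          omega
        · -- v's adjacent values are both below k; use the rank at i+2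
          have hvp : (v ⟨i, Nat.lt_of_succ_lt h⟩ : ℕ) < k := by omega
          have hvk : ¬ k ≤ (v ⟨i, Nat.lt_of_succ_lt h⟩ : ℕ) := by omega
          have s1 := rk_succ v ⟨i + 1, h⟩ k
          have s2 := rk_succ v ⟨i, Nat.lt_of_succ_lt h⟩ k
          simp only [Fin.val_mk] at s1 s2
          rw [if_neg hkv] at s1
          rw [if_neg hvk] at s2
          have s3 := rk_succ y ⟨i + 1, h⟩ k
          have s4 := rk_succ y ⟨i, Nat.lt_of_succ_lt h⟩ k
          simp only [Fin.val_mk] at s3 s4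
          rw [if_pos hky] at s3
          have s5 := hr (i + 1 + 1) k
          have s6 := hr i k
          rw [if_pos hky, if_neg hkv]
          omega
      · rw [if_neg hky]
        have := hr i k
        by_cases hkv : k ≤ (v ⟨i + 1, h⟩ : ℕ) <;> simp [hkv] <;> omega
    · have hmid' : ¬(((⟨i, Nat.lt_of_succ_lt h⟩ : Fin n) : ℕ) < a ∧ a ≤ ((⟨i + 1, h⟩ : Fin n) : ℕ)) := by
        simpa using hmid
      rw [sTr_eq h, rk_mul_swap_eq (fin_lt h) hmid' k, rk_mul_swap_eq (fin_lt h) hmid' k]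
      exact hr a k
  · intro hc
    have h1 : len n (y * sTr n i) = len n (v * sTr n i) := by rw [hc]
    have h2 := len_mul_sTr_le y i
    omega

lemma len_sTr {i : ℕ} (h : i + 1 < n) : len n (sTr n i) = 1 := by
  have h1 : (1 : Equiv.Perm (Fin n)) ⟨i, Nat.lt_of_succ_lt h⟩ < (1 : Equiv.Perm (Fin n)) ⟨i + 1, h⟩ := by
    simp only [Equiv.Perm.one_apply]
    exact fin_lt h
  have := len_mul_sTr_asc h h1
  rwa [one_mul, len_one] at this

lemma len_mul_le (x y : Equiv.Perm (Fin n)) : len n (x * y) ≤ len n x + len n y := by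
  obtain ⟨lx, hx1, hx2, hx3⟩ := exists_list x
  obtain ⟨ly, hy1, hy2, hy3⟩ := exists_list y
  have hprod : x * y = ((lx ++ ly).map (sTr n)).prod := by
    rw [List.map_append, List.prod_append, ← hx3, ← hy3]
  have hmem : (lx ++ ly).length ∈ {k | ∃ l : List ℕ, l.length = k ∧ (∀ i ∈ l, i + 1 < n) ∧
      x * y = (l.map (sTr n)).prod} := by
    refine ⟨lx ++ ly, rfl, ?_, hprod⟩
    intro i hi
    rcases List.mem_append.1 hi with hi | hi
    · exact hx2 i hi
    · exact hy2 i hi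
  have := Nat.sInf_le hmem
  rw [List.length_append, hx1, hy1] at this
  rw [len_eq_pinv x, len_eq_pinv y]
  exact this

lemma sTr_inv (i : ℕ) : (sTr n i)⁻¹ = sTr n i := by
  rw [inv_eq_iff_mul_eq_one, sTr_mul_self]

lemma neg_one_pow_eq_of_mod_eq {R : Type*} [Monoid R] [HasDistribNeg R] {a b : ℕ}
    (h : a % 2 = b % 2) : ((-1 : R)) ^ a = (-1 : R) ^ b := by
  rw [← Nat.div_add_mod a 2, ← Nat.div_add_mod b 2, pow_add, pow_add, pow_mul, pow_mul,
    neg_one_sq, one_pow, one_pow, h]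

lemma neg_one_pow_eq_neg_of_mod_ne {R : Type*} [Monoid R] [HasDistribNeg R] {a b : ℕ}
    (h : ¬ a % 2 = b % 2) : ((-1 : R)) ^ a = -(-1 : R) ^ b := by
  have ha := Nat.mod_two_eq_zero_or_one a
  have hb := Nat.mod_two_eq_zero_or_one b
  rcases ha with ha | ha <;> rcases hb with hb | hb
  · exact absurd (ha.trans hb.symm) h
  · rw [← Nat.div_add_mod a 2, ← Nat.div_add_mod b 2, ha, hb, pow_add, pow_add, pow_mul,
      pow_mul, neg_one_sq, one_pow, one_pow]
    simp
  · rw [← Nat.div_add_mod a 2, ← Nat.div_add_mod b 2, ha, hb, pow_add, pow_add, pow_mul,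
      pow_mul, neg_one_sq, one_pow, one_pow]
    simp
  · exact absurd (ha.trans hb.symm) h

lemma neg_one_pow_mul_self {R : Type*} [Monoid R] [HasDistribNeg R] (a : ℕ) :
    ((-1 : R)) ^ a * (-1 : R) ^ a = 1 := by
  rw [← pow_add]
  exact Even.neg_one_pow ⟨a, rfl⟩

lemma inverse_eq_of {H : Type*} [Ring H] {a b : H} (h1 : a * b = 1) (h2 : b * a = 1) :
    Ring.inverse a = b :=
  Ring.inverse_unit (⟨a, b, h1, h2⟩ : Hˣ)

section Algebra

variable {R : Type*} [CommRing R] {n : ℕ} {H : Type*} [Ring H] [Algebra R H]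

lemma T_mul_T (T : Equiv.Perm (Fin n) → H) (hT1 : T 1 = 1)
    (hmul1 : ∀ (w : Equiv.Perm (Fin n)) (i : ℕ), i + 1 < n →
      len n (w * sTr n i) = len n w + 1 → T w * T (sTr n i) = T (w * sTr n i)) :
    ∀ (y x : Equiv.Perm (Fin n)), len n (x * y) = len n x + len n y →
      T x * T y = T (x * y) := by
  suffices Hs : ∀ N (y x : Equiv.Perm (Fin n)), len n y = N →
      len n (x * y) = len n x + len n y → T x * T y = T (x * y) from
    fun y x h => Hs (len n y) y x rfl h
  intro N
  induction N using Nat.strong_induction_on with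
  | _ N IH =>
  intro y x hN hadd
  by_cases hy : y = 1
  · subst hy
    rw [hT1, mul_one, mul_one]
  · obtain ⟨i, h, hdesc⟩ := exists_descent_len hy
    have hyy : y = (y * sTr n i) * sTr n i := by rw [mul_assoc, sTr_mul_self, mul_one]
    have hlt : len n (y * sTr n i) < N := by omega
    have hadd' : len n (x * (y * sTr n i)) = len n x + len n (y * sTr n i) := by
      have a1 : len n (x * y) ≤ len n (x * (y * sTr n i)) + 1 := by
        have hx : x * y = (x * (y * sTr n i)) * sTr n i := by
          rw [mul_assoc, mul_assoc, sTr_mul_self, mul_one]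
        rw [hx]
        exact len_mul_sTr_le _ i
      have a2 := len_mul_le x (y * sTr n i)
      omega
    have e1 : T x * T (y * sTr n i) = T (x * (y * sTr n i)) := IH _ hlt (y * sTr n i) x rfl hadd'
    have e2 : T (y * sTr n i) * T (sTr n i) = T y := by
      have := hmul1 (y * sTr n i) i h (by rw [← hyy]; omega)
      rwa [← hyy] at this
    have e3 : T (x * (y * sTr n i)) * T (sTr n i) = T (x * y) := by
      have heq : (x * (y * sTr n i)) * sTr n i = x * y := by
        rw [mul_assoc, mul_assoc, sTr_mul_self, mul_one]
      have := hmul1 (x * (y * sTr n i)) i h (by rw [heq]; omega)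
      rwa [heq] at this
    calc T x * T y = T x * (T (y * sTr n i) * T (sTr n i)) := by rw [e2]
    _ = (T x * T (y * sTr n i)) * T (sTr n i) := by rw [mul_assoc]
    _ = T (x * (y * sTr n i)) * T (sTr n i) := by rw [e1]
    _ = T (x * y) := e3

lemma T_sTr_inv (q : R) (T : Equiv.Perm (Fin n) → H) (hT1 : T 1 = 1)
    (hmul2 : ∀ (w : Equiv.Perm (Fin n)) (i : ℕ), i + 1 < n →
      len n (w * sTr n i) + 1 = len n w →
      T w * T (sTr n i) = T (w * sTr n i) + (q - Ring.inverse q) • T w)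
    {i : ℕ} (h : i + 1 < n) :
    Ring.inverse (T (sTr n i)) = T (sTr n i) - (q - Ring.inverse q) • 1 := by
  have hlen : len n (sTr n i * sTr n i) + 1 = len n (sTr n i) := by
    rw [sTr_mul_self, len_one, len_sTr h]
  have hsq := hmul2 (sTr n i) i h hlen
  rw [sTr_mul_self, hT1] at hsq
  apply inverse_eq_of
  · rw [mul_sub, hsq, mul_smul_comm, mul_one]
    abel
  · rw [sub_mul, hsq, smul_mul_assoc, one_mul]
    abel

lemma hash_hash (T : Equiv.Perm (Fin n) → H) (hTunit : ∀ w, IsUnit (T w))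
    (hash : H ≃ₐ[R] H)
    (hhash : ∀ w, hash (T w) = ((-1 : R) ^ len n w) • Ring.inverse (T w⁻¹)) :
    ∀ w, hash (hash (T w)) = T w := by
  intro w
  have h2 : Ring.inverse (T w⁻¹) * T w⁻¹ = 1 := Ring.inverse_mul_cancel _ (hTunit _)
  have e2 : hash (Ring.inverse (T w⁻¹)) * hash (T w⁻¹) = 1 := by
    rw [← map_mul, h2, map_one]
  have hw' : hash (T w⁻¹) = ((-1 : R) ^ len n w) • Ring.inverse (T w) := by
    rw [hhash w⁻¹, inv_inv, len_inv]
  have e3 : hash (T w⁻¹) * (((-1 : R) ^ len n w) • T w) = 1 := by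
    rw [hw', smul_mul_smul_comm, neg_one_pow_mul_self,
      Ring.inverse_mul_cancel _ (hTunit w), one_smul]
  have key : hash (Ring.inverse (T w⁻¹)) = ((-1 : R) ^ len n w) • T w :=
    left_inv_eq_right_inv e2 e3
  rw [hhash w, map_smul, key, smul_smul, neg_one_pow_mul_self, one_smul]

lemma hash_T_mem (q : R) (T : Equiv.Perm (Fin n) → H) (hT1 : T 1 = 1)
    (hmul1 : ∀ (w : Equiv.Perm (Fin n)) (i : ℕ), i + 1 < n →
      len n (w * sTr n i) = len n w + 1 → T w * T (sTr n i) = T (w * sTr n i))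
    (hmul2 : ∀ (w : Equiv.Perm (Fin n)) (i : ℕ), i + 1 < n →
      len n (w * sTr n i) + 1 = len n w →
      T w * T (sTr n i) = T (w * sTr n i) + (q - Ring.inverse q) • T w)
    (hash : H ≃ₐ[R] H)
    (hhash : ∀ w, hash (T w) = ((-1 : R) ^ len n w) • Ring.inverse (T w⁻¹)) :
    ∀ w, hash (T w) - ((-1 : R) ^ len n w) • T w ∈
      Submodule.span R (T '' {y | bruhatLT n y w}) := by
  suffices Hs : ∀ N (w : Equiv.Perm (Fin n)), len n w = N →
      hash (T w) - ((-1 : R) ^ len n w) • T w ∈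
        Submodule.span R (T '' {y | bruhatLT n y w}) from fun w => Hs (len n w) w rfl
  intro N
  induction N using Nat.strong_induction_on with
  | _ N IH =>
  intro w hN
  by_cases hw : w = 1
  · subst hw
    rw [hT1, map_one, len_one, pow_zero, one_smul, sub_self]
    exact zero_mem _
  · obtain ⟨i, h, hdesc⟩ := exists_descent_len hw
    have hwv : w = (w * sTr n i) * sTr n i := by rw [mul_assoc, sTr_mul_self, mul_one]
    have hasc : len n ((w * sTr n i) * sTr n i) = len n (w * sTr n i) + 1 := by
      rw [← hwv]; omega
    have hTw : T w = T (w * sTr n i) * T (sTr n i) := by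
      have := hmul1 (w * sTr n i) i h hasc
      rw [← hwv] at this
      exact this.symm
    have hTs : hash (T (sTr n i)) = (q - Ring.inverse q) • (1 : H) - T (sTr n i) := by
      rw [hhash (sTr n i), sTr_inv, len_sTr h, pow_one, T_sTr_inv q T hT1 hmul2 h,
        neg_one_smul, neg_sub]
    have hdvmem := IH (len n (w * sTr n i)) (by omega) (w * sTr n i) rfl
    have hstep : bruhatLT n (w * sTr n i) w := by
      have := bruhat_step_sTr h hasc
      rwa [← hwv] at this
    have hsub : Submodule.span R (T '' {y | bruhatLT n y (w * sTr n i)}) ≤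
        Submodule.span R (T '' {y | bruhatLT n y w}) := by
      apply Submodule.span_mono
      apply Set.image_mono
      intro y hy
      exact Relation.TransGen.trans hy hstep
    have hvV : T (w * sTr n i) ∈ Submodule.span R (T '' {y | bruhatLT n y w}) :=
      Submodule.subset_span ⟨w * sTr n i, hstep, rfl⟩
    have hmulV : ∀ x ∈ Submodule.span R (T '' {y | bruhatLT n y (w * sTr n i)}),
        x * T (sTr n i) ∈ Submodule.span R (T '' {y | bruhatLT n y w}) := by
      intro x hx
      have hle : Submodule.span R (T '' {y | bruhatLT n y (w * sTr n i)}) ≤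
          Submodule.comap (LinearMap.mulRight R (T (sTr n i)))
            (Submodule.span R (T '' {y | bruhatLT n y w})) := by
        rw [Submodule.span_le]
        rintro _ ⟨y, hy, rfl⟩
        simp only [Submodule.mem_comap, LinearMap.mulRight_apply, SetLike.mem_coe]
        have hlift : bruhatLT n (y * sTr n i) w := by
          have := bruhat_lift h hy hasc
          rwa [← hwv] at this
        rcases len_mul_sTr_cases y h with hc | hc
        · rw [hmul1 y i h hc]
          exact Submodule.subset_span ⟨y * sTr n i, hlift, rfl⟩
        · rw [hmul2 y i h hc]
          apply add_mem
          · exact Submodule.subset_span ⟨y * sTr n i, hlift, rfl⟩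
          · exact Submodule.smul_mem _ _
              (Submodule.subset_span ⟨y, Relation.TransGen.trans hy hstep, rfl⟩)
      exact hle hx
    set εv : R := (-1 : R) ^ len n (w * sTr n i) with hεv
    set ξ : R := q - Ring.inverse q with hξ
    set dv : H := hash (T (w * sTr n i)) - εv • T (w * sTr n i) with hdv
    have hhv : hash (T (w * sTr n i)) = εv • T (w * sTr n i) + dv := by rw [hdv]; abel
    have hεw : ((-1 : R) ^ len n w) = -εv := by
      rw [hεv, ← hdesc, pow_succ]
      ring
    have hexp : hash (T w) - ((-1 : R) ^ len n w) • T w =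
        (ξ * εv) • T (w * sTr n i) + ξ • dv - dv * T (sTr n i) := by
      rw [hTw, map_mul, hhv, hTs, hεw]
      have ha : (εv • T (w * sTr n i) + dv) * (ξ • (1 : H) - T (sTr n i)) =
          ξ • (εv • T (w * sTr n i)) - εv • (T (w * sTr n i) * T (sTr n i)) +
            (ξ • dv - dv * T (sTr n i)) := by
        rw [add_mul, mul_sub, mul_sub, mul_smul_comm, mul_smul_comm, mul_one, mul_one,
          smul_mul_assoc]
      rw [ha]
      module
    rw [hexp]
    exact sub_mem (add_mem (Submodule.smul_mem _ _ hvV) (Submodule.smul_mem _ _ (hsub hdvmem)))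
      (hmulV dv hdvmem)

end Algebra

section Main

variable {R : Type*} [CommRing R] {n : ℕ} {H : Type*} [Ring H] [Algebra R H]

lemma mem_span_T_sum (T : Equiv.Perm (Fin n) → H) (bT : Module.Basis (Equiv.Perm (Fin n)) R H)
    (hbT : ∀ w, bT w = T w) {P : Equiv.Perm (Fin n) → Prop} {x : H}
    (hx : x ∈ Submodule.span R (T '' {y | P y})) :
    ∃ b : Equiv.Perm (Fin n) → R,
      x = ∑ y ∈ Finset.univ.filter (fun y => P y), b y • T y := by
  have hfun : ⇑bT = T := funext hbT
  rw [← hfun] at hx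
  have hsupp := (Module.Basis.mem_span_image bT).1 hx
  refine ⟨fun y => bT.repr x y, ?_⟩
  have hstep : ∑ y ∈ Finset.univ.filter (fun y => P y), bT.repr x y • T y
      = ∑ y ∈ Finset.univ, bT.repr x y • T y := by
    apply Finset.sum_subset (Finset.filter_subset _ _)
    intro y _ hy
    have hyP : ¬ P y := by
      intro hc
      exact hy (Finset.mem_filter.2 ⟨Finset.mem_univ _, hc⟩)
    have hns : y ∉ (bT.repr x).support := by
      intro hc
      exact hyP (hsupp hc)
    rw [Finsupp.notMem_support_iff.1 hns, zero_smul]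
  have hsum := bT.sum_repr x
  simp only [hbT] at hsum
  rw [hstep, hsum]

lemma repr_span_zero (bT : Module.Basis (Equiv.Perm (Fin n)) R H)
    {S : Set (Equiv.Perm (Fin n))} {x : H} (hx : x ∈ Submodule.span R (⇑bT '' S))
    {y₀ : Equiv.Perm (Fin n)} (hy₀ : y₀ ∉ S) : bT.repr x y₀ = 0 := by
  have hsupp := (Module.Basis.mem_span_image bT).1 hx
  by_contra hc
  exact hy₀ (hsupp (Finsupp.mem_support_iff.2 hc))

/-- Existence part of Statement (a). -/
lemma Bexists (q : R) (h2 : IsUnit (2 : R))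
    (T : Equiv.Perm (Fin n) → H) (bT : Module.Basis (Equiv.Perm (Fin n)) R H)
    (hbT : ∀ w, bT w = T w) (hT1 : T 1 = 1) (hTunit : ∀ w, IsUnit (T w))
    (hmul1 : ∀ (w : Equiv.Perm (Fin n)) (i : ℕ), i + 1 < n →
      len n (w * sTr n i) = len n w + 1 → T w * T (sTr n i) = T (w * sTr n i))
    (hmul2 : ∀ (w : Equiv.Perm (Fin n)) (i : ℕ), i + 1 < n →
      len n (w * sTr n i) + 1 = len n w →
      T w * T (sTr n i) = T (w * sTr n i) + (q - Ring.inverse q) • T w)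
    (hash : H ≃ₐ[R] H)
    (hhash : ∀ w, hash (T w) = ((-1 : R) ^ len n w) • Ring.inverse (T w⁻¹)) :
    ∀ z : Equiv.Perm (Fin n), ∃ Bz : H,
      hash Bz = ((-1 : R) ^ len n z) • Bz ∧
      ∃ b : Equiv.Perm (Fin n) → R,
        Bz = T z + ∑ y ∈ Finset.univ.filter (fun y => precLT n y z), b y • T y := by
  have hfun : ⇑bT = T := funext hbT
  suffices Hs : ∀ N (z : Equiv.Perm (Fin n)), len n z = N → ∃ Bz : H,
      hash Bz = ((-1 : R) ^ len n z) • Bz ∧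
      ∃ b : Equiv.Perm (Fin n) → R,
        Bz = T z + ∑ y ∈ Finset.univ.filter (fun y => precLT n y z), b y • T y from
    fun z => Hs (len n z) z rfl
  intro N
  induction N using Nat.strong_induction_on with
  | _ N IH =>
  intro z hN
  set εz : R := (-1 : R) ^ len n z with hεz
  set dz : H := hash (T z) - εz • T z with hdz
  have hdzmem : dz ∈ Submodule.span R (T '' {y | bruhatLT n y z}) :=
    hash_T_mem q T hT1 hmul1 hmul2 hash hhash z
  set u : H := (Ring.inverse (2 : R) * εz) • dz with hu
  have humem : u ∈ Submodule.span R (T '' {y | bruhatLT n y z}) :=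
    Submodule.smul_mem _ _ hdzmem
  set A : H := Ring.inverse (2 : R) • (T z + εz • hash (T z)) with hA
  have hee : εz * εz = 1 := by rw [hεz]; exact neg_one_pow_mul_self _
  have hi2 : Ring.inverse (2 : R) * 2 = 1 := Ring.inverse_mul_cancel _ h2
  have h2T : Ring.inverse (2 : R) • T z + Ring.inverse (2 : R) • T z = T z := by
    rw [← add_smul]
    have he : Ring.inverse (2 : R) + Ring.inverse (2 : R) = Ring.inverse (2 : R) * 2 := by ring
    rw [he, hi2, one_smul]
  have hAeq : A = T z + u := by
    rw [hA, hu, hdz]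
    have key : (Ring.inverse (2 : R) * εz) • (εz • T z) = Ring.inverse (2 : R) • T z := by
      rw [smul_smul, mul_assoc, hee, mul_one]
    rw [smul_sub, key, smul_add, smul_smul]
    have habs : ∀ (a b X : H), a + a = b → a + X = b + (X - a) := by
      intro a b X hab
      rw [← hab]; abel
    exact habs _ _ _ h2T
  have hhashA : hash A = εz • A := by
    rw [hA, map_smul, map_add, map_smul, hash_hash T hTunit hash hhash z,
      smul_comm εz (Ring.inverse (2 : R))]
    congr 1
    rw [smul_add, smul_smul, hee, one_smul, add_comm]
  set c := bT.repr u with hc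
  have hsupp : ↑c.support ⊆ {y | bruhatLT n y z} := by
    rw [hc]
    exact (Module.Basis.mem_span_image bT).1 (by rwa [hfun])
  set S₁ := c.support.filter (fun y => len n y % 2 = len n z % 2) with hS₁
  have hS₁lt : ∀ y ∈ S₁, len n y < len n z := by
    intro y hy
    rw [hS₁, Finset.mem_filter] at hy
    exact bruhat_len_lt (hsupp hy.1)
  -- choose the elements B_y for y ∈ S₁ by induction
  have hchoice : ∀ y : Equiv.Perm (Fin n), len n y < len n z → ∃ By : H,
      hash By = ((-1 : R) ^ len n y) • By ∧
      ∃ b : Equiv.Perm (Fin n) → R,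
        By = T y + ∑ y' ∈ Finset.univ.filter (fun y' => precLT n y' y), b y' • T y' := by
    intro y hy
    exact IH (len n y) (by omega) y rfl
  set g : Equiv.Perm (Fin n) → H := fun y =>
    if hy : len n y < len n z then Classical.choose (hchoice y hy) else 0 with hg
  have hgspec : ∀ y (hy : len n y < len n z),
      hash (g y) = ((-1 : R) ^ len n y) • g y ∧
      ∃ b : Equiv.Perm (Fin n) → R,
        g y = T y + ∑ y' ∈ Finset.univ.filter (fun y' => precLT n y' y), b y' • T y' := by
    intro y hy
    rw [hg]
    simp only [dif_pos hy]
    exact Classical.choose_spec (hchoice y hy)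
  refine ⟨A - ∑ y ∈ S₁, c y • g y, ?_, ?_⟩
  · -- eigenvector property
    rw [map_sub, hhashA, map_sum, smul_sub, Finset.smul_sum]
    congr 1
    apply Finset.sum_congr rfl
    intro y hy
    have hylt := hS₁lt y hy
    have hparity : len n y % 2 = len n z % 2 := (Finset.mem_filter.1 hy).2
    have heps : ((-1 : R) ^ len n y) = εz := by
      rw [hεz]; exact neg_one_pow_eq_of_mod_eq hparity
    rw [map_smul, (hgspec y hylt).1, heps, smul_smul, smul_smul, mul_comm]
  · -- the triangular form
    have hmem : (A - ∑ y ∈ S₁, c y • g y) - T z ∈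
        Submodule.span R (T '' {y | precLT n y z}) := by
      have hrw : (A - ∑ y ∈ S₁, c y • g y) - T z =
          (u - ∑ y ∈ S₁, c y • T y) -
            ∑ y ∈ S₁, c y • (g y - T y) := by
        rw [hAeq]
        simp only [smul_sub]
        rw [Finset.sum_sub_distrib]
        abel
      rw [hrw]
      apply sub_mem
      · -- u minus its same-parity part
        have husum : u = ∑ y ∈ Finset.univ, c y • T y := by
          rw [hc, ← hfun]
          exact (bT.sum_repr u).symm
        have hS₁univ : S₁ ⊆ Finset.univ := Finset.subset_univ _
        rw [husum, ← Finset.sum_sdiff hS₁univ, add_sub_cancel_right]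
        apply Submodule.sum_mem
        intro y hy
        rw [Finset.mem_sdiff] at hy
        by_cases hcy : c y = 0
        · rw [hcy, zero_smul]
          exact zero_mem _
        · have hysupp : y ∈ c.support := Finsupp.mem_support_iff.2 hcy
          have hbr : bruhatLT n y z := hsupp hysupp
          have hpar : ¬ (len n y % 2 = len n z % 2) := by
            intro hcc
            exact hy.2 (Finset.mem_filter.2 ⟨hysupp, hcc⟩)
          exact Submodule.smul_mem _ _ (Submodule.subset_span ⟨y, ⟨hbr, hpar⟩, rfl⟩)
      · apply Submodule.sum_mem
        intro y hy
        have hylt := hS₁lt y hy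
        have hparity : len n y % 2 = len n z % 2 := (Finset.mem_filter.1 hy).2
        have hbry : bruhatLT n y z := hsupp (Finset.mem_filter.1 hy).1
        obtain ⟨b, hb⟩ := (hgspec y hylt).2
        have : g y - T y = ∑ y' ∈ Finset.univ.filter (fun y' => precLT n y' y), b y' • T y' := by
          rw [hb]; abel
        rw [this]
        apply Submodule.smul_mem
        apply Submodule.sum_mem
        intro y' hy'
        have hy'p : precLT n y' y := (Finset.mem_filter.1 hy').2
        have : precLT n y' z := by
          refine ⟨Relation.TransGen.trans hy'p.1 hbry, ?_⟩
          intro hcc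
          exact hy'p.2 (hcc.trans hparity.symm)
        exact Submodule.smul_mem _ _ (Submodule.subset_span ⟨y', this, rfl⟩)
    obtain ⟨b, hb⟩ := mem_span_T_sum T bT hbT hmem
    exact ⟨b, by rw [← hb]; abel⟩

/-- Uniqueness part of Statement (a). -/
lemma Bunique (q : R) (h2 : IsUnit (2 : R))
    (T : Equiv.Perm (Fin n) → H) (bT : Module.Basis (Equiv.Perm (Fin n)) R H)
    (hbT : ∀ w, bT w = T w) (hT1 : T 1 = 1)
    (hmul1 : ∀ (w : Equiv.Perm (Fin n)) (i : ℕ), i + 1 < n →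
      len n (w * sTr n i) = len n w + 1 → T w * T (sTr n i) = T (w * sTr n i))
    (hmul2 : ∀ (w : Equiv.Perm (Fin n)) (i : ℕ), i + 1 < n →
      len n (w * sTr n i) + 1 = len n w →
      T w * T (sTr n i) = T (w * sTr n i) + (q - Ring.inverse q) • T w)
    (hash : H ≃ₐ[R] H)
    (hhash : ∀ w, hash (T w) = ((-1 : R) ^ len n w) • Ring.inverse (T w⁻¹))
    (z : Equiv.Perm (Fin n)) (B₁ B₂ : H)
    (h₁ : hash B₁ = ((-1 : R) ^ len n z) • B₁ ∧ ∃ b : Equiv.Perm (Fin n) → R,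
      B₁ = T z + ∑ y ∈ Finset.univ.filter (fun y => precLT n y z), b y • T y)
    (h₂ : hash B₂ = ((-1 : R) ^ len n z) • B₂ ∧ ∃ b : Equiv.Perm (Fin n) → R,
      B₂ = T z + ∑ y ∈ Finset.univ.filter (fun y => precLT n y z), b y • T y) :
    B₁ = B₂ := by
  obtain ⟨he₁, b₁, hb₁⟩ := h₁
  obtain ⟨he₂, b₂, hb₂⟩ := h₂
  have hfun : ⇑bT = T := funext hbT
  have hdsum : B₁ - B₂ = ∑ y ∈ Finset.univ.filter (fun y => precLT n y z),
      (b₁ y - b₂ y) • T y := by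
    rw [hb₁, hb₂]
    simp only [sub_smul]
    rw [Finset.sum_sub_distrib]
    abel
  have hdmem : B₁ - B₂ ∈ Submodule.span R (T '' {y | precLT n y z}) := by
    rw [hdsum]
    apply Submodule.sum_mem
    intro y hy
    exact Submodule.smul_mem _ _
      (Submodule.subset_span ⟨y, (Finset.mem_filter.1 hy).2, rfl⟩)
  have hhashd : hash (B₁ - B₂) = ((-1 : R) ^ len n z) • (B₁ - B₂) := by
    rw [map_sub, he₁, he₂, smul_sub]
  have hd0 : B₁ - B₂ = 0 := by
    by_contra hd0
    set d := B₁ - B₂ with hd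
    have hcne : bT.repr d ≠ 0 := by
      intro hc
      exact hd0 ((LinearEquiv.map_eq_zero_iff bT.repr).1 hc)
    have hsne : (bT.repr d).support.Nonempty := Finsupp.support_nonempty_iff.2 hcne
    obtain ⟨y₀, hy₀mem, hy₀max⟩ := Finset.exists_max_image (bT.repr d).support (len n) hsne
    have hsupp : ↑(bT.repr d).support ⊆ {y | precLT n y z} :=
      (Module.Basis.mem_span_image bT).1 (by rwa [hfun])
    have hdrepr : d = ∑ y ∈ Finset.univ, bT.repr d y • T y := by
      have := bT.sum_repr d
      simp only [hbT] at this
      exact this.symm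
    have hhd : hash d = ∑ y ∈ Finset.univ, bT.repr d y • (((-1 : R) ^ len n y) • T y) +
        ∑ y ∈ Finset.univ, bT.repr d y • (hash (T y) - ((-1 : R) ^ len n y) • T y) := by
      rw [← Finset.sum_add_distrib]
      conv_lhs => rw [hdrepr, map_sum]
      apply Finset.sum_congr rfl
      intro y _
      rw [map_smul, ← smul_add]
      congr 1
      abel
    have hcoord2 : bT.repr (∑ y ∈ Finset.univ,
        bT.repr d y • (hash (T y) - ((-1 : R) ^ len n y) • T y)) y₀ = 0 := by
      apply repr_span_zero bT (S := {u | len n u < len n y₀})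
      · apply Submodule.sum_mem
        intro y _
        by_cases hcy : bT.repr d y = 0
        · rw [hcy, zero_smul]
          exact zero_mem _
        · apply Submodule.smul_mem
          have hmem := hash_T_mem q T hT1 hmul1 hmul2 hash hhash y
          have hyle : len n y ≤ len n y₀ := hy₀max y (Finsupp.mem_support_iff.2 hcy)
          have hmono : Submodule.span R (T '' {u | bruhatLT n u y}) ≤
              Submodule.span R (⇑bT '' {u | len n u < len n y₀}) := by
            rw [hfun]
            refine Submodule.span_mono (Set.image_mono ?_)
            intro u hu
            exact lt_of_lt_of_le (bruhat_len_lt hu) hyle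
          exact hmono hmem
      · simp
    have hcoord1 : bT.repr (∑ y ∈ Finset.univ,
        bT.repr d y • (((-1 : R) ^ len n y) • T y)) y₀ =
        bT.repr d y₀ * ((-1 : R) ^ len n y₀) := by
      simp only [← hbT, smul_smul]
      rw [map_sum]
      rw [Finset.sum_apply']
      rw [Finset.sum_eq_single y₀]
      · rw [map_smul, Module.Basis.repr_self, Finsupp.smul_apply, Finsupp.single_apply,
          if_pos rfl, smul_eq_mul, mul_one]
      · intro y _ hy
        rw [map_smul, Module.Basis.repr_self, Finsupp.smul_apply, Finsupp.single_apply,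
          if_neg hy, smul_eq_mul, mul_zero]
      · intro hy
        exact absurd (Finset.mem_univ y₀) hy
    have heq1 : bT.repr (hash d) y₀ = bT.repr d y₀ * ((-1 : R) ^ len n y₀) := by
      rw [hhd, map_add, Finsupp.add_apply, hcoord1, hcoord2, add_zero]
    have heq2 : bT.repr (hash d) y₀ = ((-1 : R) ^ len n z) * bT.repr d y₀ := by
      rw [hhashd, map_smul, Finsupp.smul_apply, smul_eq_mul]
    have hpar : ¬ (len n y₀ % 2 = len n z % 2) := (hsupp hy₀mem).2
    have hneg : ((-1 : R) ^ len n y₀) = -((-1 : R) ^ len n z) :=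
      neg_one_pow_eq_neg_of_mod_ne hpar
    have hfinal : ((-1 : R) ^ len n z) * (2 * bT.repr d y₀) = 0 := by
      rw [heq2] at heq1
      rw [hneg] at heq1
      linear_combination heq1
    have h20 : (2 : R) * bT.repr d y₀ = 0 := by
      have hu : IsUnit ((-1 : R) ^ len n z) := (isUnit_one.neg).pow _
      exact (IsUnit.mul_right_eq_zero hu).1 hfinal
    have : bT.repr d y₀ = 0 := (IsUnit.mul_right_eq_zero h2).1 h20
    exact Finsupp.mem_support_iff.1 hy₀mem this
  have := sub_eq_zero.1 hd0
  exact this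

/-- Parts (b) and (c). -/
lemma Bbasis (h2 : IsUnit (2 : R))
    (T : Equiv.Perm (Fin n) → H) (bT : Module.Basis (Equiv.Perm (Fin n)) R H)
    (hbT : ∀ w, bT w = T w)
    (hash : H ≃ₐ[R] H)
    (B : Equiv.Perm (Fin n) → H)
    (hB : ∀ z, hash (B z) = ((-1 : R) ^ len n z) • B z ∧
      ∃ b : Equiv.Perm (Fin n) → R,
        B z = T z + ∑ y ∈ Finset.univ.filter (fun y => precLT n y z), b y • T y) :
    (LinearIndependent R
        (fun z : {z : Equiv.Perm (Fin n) // Even (len n z)} => B z.val) ∧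
      Submodule.span R
          (Set.range fun z : {z : Equiv.Perm (Fin n) // Even (len n z)} => B z.val)
        = fixedSubmodule hash 1) ∧
     (LinearIndependent R
        (fun z : {z : Equiv.Perm (Fin n) // ¬ Even (len n z)} => B z.val) ∧
      Submodule.span R
          (Set.range fun z : {z : Equiv.Perm (Fin n) // ¬ Even (len n z)} => B z.val)
        = fixedSubmodule hash (-1)) := by
  have hfun : ⇑bT = T := funext hbT
  -- coordinates of B z in the standard basis
  have hreprB : ∀ z y₀ : Equiv.Perm (Fin n), len n z ≤ len n y₀ →
      bT.repr (B z) y₀ = if z = y₀ then 1 else 0 := by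
    intro z y₀ hlen
    obtain ⟨b, hb⟩ := (hB z).2
    rw [hb, map_add, Finsupp.add_apply, map_sum, Finset.sum_apply']
    have h1 : bT.repr (T z) y₀ = if z = y₀ then 1 else 0 := by
      rw [← hbT, Module.Basis.repr_self, Finsupp.single_apply]
    have h2' : ∀ y ∈ Finset.univ.filter (fun y => precLT n y z),
        bT.repr (b y • T y) y₀ = 0 := by
      intro y hy
      have hprec : precLT n y z := (Finset.mem_filter.1 hy).2
      have hyne : y ≠ y₀ := by
        intro hc
        have hlt := bruhat_len_lt hprec.1
        rw [hc] at hlt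
        omega
      rw [map_smul, ← hbT, Module.Basis.repr_self, Finsupp.smul_apply, Finsupp.single_apply,
        if_neg hyne, smul_eq_mul, mul_zero]
    rw [Finset.sum_congr rfl h2', Finset.sum_const_zero, add_zero, h1]
  -- global linear independence of the B family
  have hLI : LinearIndependent R B := by
    rw [linearIndependent_iff']
    intro s
    induction s using Finset.strongInduction with
    | _ s IH =>
    intro g hsum i hi
    have hsne : s.Nonempty := ⟨i, hi⟩
    obtain ⟨z₀, hz₀, hmax⟩ := Finset.exists_max_image s (len n) hsne
    have hg0 : g z₀ = 0 := by
      have h0 : bT.repr (∑ z ∈ s, g z • B z) z₀ = 0 := by rw [hsum, map_zero]; rfl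
      rw [map_sum, Finset.sum_apply'] at h0
      rw [Finset.sum_eq_single z₀] at h0
      · rwa [map_smul, Finsupp.smul_apply, hreprB z₀ z₀ le_rfl, if_pos rfl, smul_eq_mul,
          mul_one] at h0
      · intro y hy hyne
        rw [map_smul, Finsupp.smul_apply, hreprB y z₀ (hmax y hy), if_neg hyne,
          smul_eq_mul, mul_zero]
      · intro hc
        exact absurd hz₀ hc
    by_cases hiz : i = z₀
    · rw [hiz]; exact hg0
    · have hsum' : ∑ z ∈ s.erase z₀, g z • B z = 0 := by
        have hth := Finset.add_sum_erase s (fun z => g z • B z) hz₀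
        simp only [hg0, zero_smul, zero_add] at hth
        rw [hth, hsum]
      exact IH (s.erase z₀) (Finset.erase_ssubset hz₀) g hsum' i
        (Finset.mem_erase.2 ⟨hiz, hi⟩)
  -- the B family spans
  have hTspan : ∀ z, T z ∈ Submodule.span R (Set.range B) := by
    suffices Hs : ∀ N z, len n z = N → T z ∈ Submodule.span R (Set.range B) from
      fun z => Hs (len n z) z rfl
    intro N
    induction N using Nat.strong_induction_on with
    | _ N IH =>
    intro z hN
    obtain ⟨b, hb⟩ := (hB z).2
    have hTz : T z = B z - ∑ y ∈ Finset.univ.filter (fun y => precLT n y z), b y • T y := by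
      rw [hb]; abel
    rw [hTz]
    apply sub_mem
    · exact Submodule.subset_span ⟨z, rfl⟩
    · apply Submodule.sum_mem
      intro y hy
      have hprec : precLT n y z := (Finset.mem_filter.1 hy).2
      have := bruhat_len_lt hprec.1
      exact Submodule.smul_mem _ _ (IH (len n y) (by omega) y rfl)
  have hspan : ⊤ ≤ Submodule.span R (Set.range B) := by
    intro x _
    have h1 : x ∈ Submodule.span R (Set.range ⇑bT) := by
      rw [Module.Basis.span_eq]; exact Submodule.mem_top
    have h2' : Submodule.span R (Set.range ⇑bT) ≤ Submodule.span R (Set.range B) := by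
      rw [Submodule.span_le]
      rintro _ ⟨z, rfl⟩
      rw [hbT]
      exact hTspan z
    exact h2' h1
  set bB : Module.Basis (Equiv.Perm (Fin n)) R H := Module.Basis.mk hLI hspan with hbB
  have hbBa : ∀ z, bB z = B z := fun z => Module.Basis.mk_apply hLI hspan z
  -- the action of hash on coordinates with respect to bB
  have hkey : ∀ (x : H) (y : Equiv.Perm (Fin n)),
      bB.repr (hash x) y = ((-1 : R) ^ len n y) * bB.repr x y := by
    intro x y
    have hx : x = ∑ z ∈ Finset.univ, bB.repr x z • B z := by
      have := bB.sum_repr x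
      simp only [hbBa] at this
      exact this.symm
    have hhx : hash x = ∑ z ∈ Finset.univ, (bB.repr x z * ((-1 : R) ^ len n z)) • B z := by
      conv_lhs => rw [hx, map_sum]
      apply Finset.sum_congr rfl
      intro z _
      rw [map_smul, (hB z).1, smul_smul]
    rw [hhx, map_sum, Finset.sum_apply']
    rw [Finset.sum_eq_single y]
    · rw [← hbBa, map_smul, Module.Basis.repr_self, Finsupp.smul_apply, Finsupp.single_apply,
        if_pos rfl, smul_eq_mul, mul_one, mul_comm]
    · intro z _ hz
      rw [← hbBa, map_smul, Module.Basis.repr_self, Finsupp.smul_apply, Finsupp.single_apply,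
        if_neg hz, smul_eq_mul, mul_zero]
    · intro hc
      exact absurd (Finset.mem_univ y) hc
  -- the two range identifications
  have hrangeE : (Set.range fun z : {z : Equiv.Perm (Fin n) // Even (len n z)} => B z.val)
      = ⇑bB '' {z | Even (len n z)} := by
    ext x
    constructor
    · rintro ⟨z, rfl⟩
      exact ⟨z.val, z.2, hbBa z.val⟩
    · rintro ⟨z, hz, rfl⟩
      exact ⟨⟨z, hz⟩, (hbBa z).symm ▸ rfl⟩
  have hrangeO : (Set.range fun z : {z : Equiv.Perm (Fin n) // ¬ Even (len n z)} => B z.val)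
      = ⇑bB '' {z | ¬ Even (len n z)} := by
    ext x
    constructor
    · rintro ⟨z, rfl⟩
      exact ⟨z.val, z.2, hbBa z.val⟩
    · rintro ⟨z, hz, rfl⟩
      exact ⟨⟨z, hz⟩, (hbBa z).symm ▸ rfl⟩
  constructor
  · constructor
    · exact hLI.comp Subtype.val Subtype.val_injective
    · apply le_antisymm
      · rw [Submodule.span_le]
        rintro _ ⟨z, rfl⟩
        have h1 := (hB z.val).1
        rw [Even.neg_one_pow z.2] at h1
        show hash (B z.val) = (1 : R) • B z.val
        exact h1
      · intro h hmem
        have hh : hash h = h := by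
          have : hash h = (1 : R) • h := hmem
          rwa [one_smul] at this
        rw [hrangeE]
        apply (Module.Basis.mem_span_image bB).2
        intro y hy
        rw [Finset.mem_coe, Finsupp.mem_support_iff] at hy
        by_contra hye
        apply hy
        simp only [Set.mem_setOf_eq] at hye
        have he := hkey h y
        rw [hh, Odd.neg_one_pow (Nat.not_even_iff_odd.1 hye)] at he
        have h20 : (2 : R) * bB.repr h y = 0 := by linear_combination he
        exact (IsUnit.mul_right_eq_zero h2).1 h20
  · constructor
    · exact hLI.comp Subtype.val Subtype.val_injective
    · apply le_antisymm
      · rw [Submodule.span_le]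
        rintro _ ⟨z, rfl⟩
        have h1 := (hB z.val).1
        rw [Odd.neg_one_pow (Nat.not_even_iff_odd.1 z.2)] at h1
        show hash (B z.val) = (-1 : R) • B z.val
        exact h1
      · intro h hmem
        have hh : hash h = -h := by
          have : hash h = (-1 : R) • h := hmem
          rwa [neg_smul, one_smul] at this
        rw [hrangeO]
        apply (Module.Basis.mem_span_image bB).2
        intro y hy
        rw [Finset.mem_coe, Finsupp.mem_support_iff] at hy
        by_contra hye
        apply hy
        simp only [Set.mem_setOf_eq, not_not] at hye
        have he := hkey h y
        rw [hh, Even.neg_one_pow hye, map_neg, Finsupp.neg_apply, one_mul] at he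
        have h20 : (2 : R) * bB.repr h y = 0 := by linear_combination -he
        exact (IsUnit.mul_right_eq_zero h2).1 h20

end Main

end BH

/-- Proposition `BBasis`: (a) for each `z ∈ 𝔖ₙ` there is a unique
`B_z ∈ H^{ε_z}` of the form `B_z = T_z + ∑_{y ≺ z} b_{yz} T_y`; (b) `{B_z : z ∈ 𝔄ₙ}`
is an `R`-basis of `𝒜ₙ(q) = H⁺`; (c) `{B_z : z ∈ 𝔖ₙ ∖ 𝔄ₙ}` is an `R`-basis of `H⁻`. -/
theorem Belt_exists_unique_and_basis
    {R : Type*} [CommRing R] (q : R) (hq : IsUnit q) (hq1 : q ≠ 1) (h2 : IsUnit (2 : R))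
    (n : ℕ) {H : Type*} [Ring H] [Algebra R H]
    -- the Iwahori–Hecke algebra of type A with its basis of standard elements T_w
    (T : Equiv.Perm (Fin n) → H)
    (bT : Module.Basis (Equiv.Perm (Fin n)) R H) (hbT : ∀ w, bT w = T w)
    (hT1 : T 1 = 1)
    (hTunit : ∀ w, IsUnit (T w))
    (hmul1 : ∀ (w : Equiv.Perm (Fin n)) (i : ℕ), i + 1 < n →
      len n (w * sTr n i) = len n w + 1 → T w * T (sTr n i) = T (w * sTr n i))
    (hmul2 : ∀ (w : Equiv.Perm (Fin n)) (i : ℕ), i + 1 < n →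
      len n (w * sTr n i) + 1 = len n w →
      T w * T (sTr n i) = T (w * sTr n i) + (q - Ring.inverse q) • T w)
    -- the hash involution
    (hash : H ≃ₐ[R] H)
    (hhash : ∀ w, hash (T w) = ((-1 : R) ^ len n w) • Ring.inverse (T w⁻¹))
    :
    -- (a): existence and uniqueness of B_z
    (∀ z : Equiv.Perm (Fin n), ∃! Bz : H,
        hash Bz = ((-1 : R) ^ len n z) • Bz ∧
        ∃ b : Equiv.Perm (Fin n) → R,
          Bz = T z + ∑ y ∈ Finset.univ.filter (fun y => precLT n y z), b y • T y) ∧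
    -- (b) and (c): for any family B of such elements, we get bases of H⁺ and of H⁻
    ∀ B : Equiv.Perm (Fin n) → H,
      (∀ z, hash (B z) = ((-1 : R) ^ len n z) • B z ∧
        ∃ b : Equiv.Perm (Fin n) → R,
          B z = T z + ∑ y ∈ Finset.univ.filter (fun y => precLT n y z), b y • T y) →
      ((LinearIndependent R
          (fun z : {z : Equiv.Perm (Fin n) // Even (len n z)} => B z.val) ∧
        Submodule.span R
            (Set.range fun z : {z : Equiv.Perm (Fin n) // Even (len n z)} => B z.val)
          = fixedSubmodule hash 1) ∧
       (LinearIndependent R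
          (fun z : {z : Equiv.Perm (Fin n) // ¬ Even (len n z)} => B z.val) ∧
        Submodule.span R
            (Set.range fun z : {z : Equiv.Perm (Fin n) // ¬ Even (len n z)} => B z.val)
          = fixedSubmodule hash (-1))) := by
  constructor
  · intro z
    obtain ⟨Bz, hz1, hz2⟩ := BH.Bexists q h2 T bT hbT hT1 hTunit hmul1 hmul2 hash hhash z
    refine ⟨Bz, ⟨hz1, hz2⟩, ?_⟩
    intro B' hB'
    exact BH.Bunique q h2 T bT hbT hT1 hmul1 hmul2 hash hhash z B' Bz hB' ⟨hz1, hz2⟩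
  · intro B hB
    exact BH.Bbasis h2 T bT hbT hash B hB


end
end

section
/- Let λ be a partition of n, S(λ) the seminormal Specht module for H_n = H_{F,q}(S_n), and τ: S(λ) → S(λ') the F-linear map with v_t ↦ v_{t'}. Then for every w ∈ S_n and every standard λ-tableau t, v_t T_w^# = τ(v_{t'} T_w). -/
open scoped Classical

noncomputable section

/-- The quantum integer `[k] = q + q³ + ⋯ + q^{2k−1}` for `k ≥ 0`, and
`[k] = −q⁻¹ − q⁻³ − ⋯ − q^{2k+1}` for `k < 0`. -/
def qint {F : Type*} [Field F] (q : F) : ℤ → F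
  | Int.ofNat k => ∑ j ∈ Finset.range k, q ^ (2 * j + 1)
  | Int.negSucc k => -∑ j ∈ Finset.range (k + 1), (q ^ (2 * j + 1))⁻¹

/-- The coefficients `α_k = √(−1)·√([k+1])·√([k−1])/[k]` for `k > 0`, with
`α_{−k} = −α_k` (and `α_0 = 0`). -/
def alph {F : Type*} [Field F] (q sqm1 : F) (sq : ℕ → F) (m : ℤ) : F :=
  if 0 ≤ m then sqm1 * sq (m.toNat + 1) * sq (m.toNat - 1) / qint q m
  else -(sqm1 * sq ((-m).toNat + 1) * sq ((-m).toNat - 1) / qint q (-m))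

/-- A standard `μ`-tableau, recorded by the positions of its entries: `pos k` is the
cell containing the entry `k+1`.  Standardness means the entries are distinct cells
of `μ` and `t(r,c) < t(s,d)` whenever `(r,c) ≠ (s,d)`, `r ≤ s` and `c ≤ d`. -/
def IsStdTab (μ : YoungDiagram) {n : ℕ} (pos : Fin n → ℕ × ℕ) : Prop :=
  Function.Injective pos ∧ (∀ k, pos k ∈ μ) ∧
    ∀ j k : Fin n, (pos j).1 ≤ (pos k).1 → (pos j).2 ≤ (pos k).2 → pos j ≠ pos k → j < k

/-- The type of standard `μ`-tableaux with `n` entries. -/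
def StdTab (μ : YoungDiagram) (n : ℕ) : Type :=
  {pos : Fin n → ℕ × ℕ // IsStdTab μ pos}

/-- The content `c_t(m+1) = c − r` of the entry `m+1`, located in cell `(r, c)`
(and junk value `0` when `m ≥ n`). -/
def contN {n : ℕ} (pos : Fin n → ℕ × ℕ) (m : ℕ) : ℤ :=
  if h : m < n then ((pos ⟨m, h⟩).2 : ℤ) - ((pos ⟨m, h⟩).1 : ℤ) else 0

/-- The axial distance `ρ_t(i+1) = c_t(i+1) − c_t(i+2)` (0-indexed `i`). -/
def rhoAx {n : ℕ} (pos : Fin n → ℕ × ℕ) (i : ℕ) (hi : i + 1 < n) : ℤ :=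
  (((pos ⟨i, Nat.lt_of_succ_lt hi⟩).2 : ℤ) - ((pos ⟨i, Nat.lt_of_succ_lt hi⟩).1 : ℤ))
    - (((pos ⟨i + 1, hi⟩).2 : ℤ) - ((pos ⟨i + 1, hi⟩).1 : ℤ))

/-- The tableau `t·s_{i+1}`, obtained from `t` by swapping the entries `i+1`, `i+2`. -/
def swapEnt {n : ℕ} (pos : Fin n → ℕ × ℕ) (i : ℕ) (hi : i + 1 < n) : Fin n → ℕ × ℕ :=
  pos ∘ (Equiv.swap ⟨i, Nat.lt_of_succ_lt hi⟩ ⟨i + 1, hi⟩)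

/-- The conjugate of a tableau: the entry in cell `(r,c)` moves to cell `(c,r)`. -/
def conjPos {n : ℕ} (pos : Fin n → ℕ × ℕ) : Fin n → ℕ × ℕ :=
  fun k => ((pos k).2, (pos k).1)

lemma isStdTab_conj {μ : YoungDiagram} {n : ℕ} {pos : Fin n → ℕ × ℕ}
    (h : IsStdTab μ pos) : IsStdTab μ.transpose (conjPos pos) := by
  obtain ⟨hinj, hmem, hord⟩ := h
  refine ⟨?_, ?_, ?_⟩
  · intro a b hab
    apply hinj
    have h1 : ((pos a).2, (pos a).1) = ((pos b).2, (pos b).1) := hab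
    have h2 := congrArg Prod.snd h1
    have h3 := congrArg Prod.fst h1
    simp only at h2 h3
    exact Prod.ext h2 h3
  · intro k
    rw [YoungDiagram.mem_transpose]
    exact hmem k
  · intro j k h1 h2 hne
    refine hord j k h2 h1 ?_
    intro hc
    exact hne (by rw [conjPos, conjPos, hc])

/-- The conjugate standard tableau `t' ∈ Std(μ')` of `t ∈ Std(μ)`. -/
def conjTab {μ : YoungDiagram} {n : ℕ} (t : StdTab μ n) : StdTab μ.transpose n :=
  ⟨conjPos t.val, isStdTab_conj t.prop⟩

/-- The conjugate standard tableau, going from `Std(μ')` back to `Std(μ)`. -/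
def backConjTab {μ : YoungDiagram} {n : ℕ} (s : StdTab μ.transpose n) : StdTab μ n :=
  ⟨conjPos s.val, by
    have h := isStdTab_conj s.prop
    rwa [YoungDiagram.transpose_transpose] at h⟩

/-- The linear map `τ : S(μ') → S(μ)` with `v_s ↦ v_{s'}`. -/
def crossTau (F : Type*) [Field F] (μ : YoungDiagram) (n : ℕ) :
    (StdTab μ.transpose n → F) →ₗ[F] (StdTab μ n → F) where
  toFun f := fun t => f (conjTab t)
  map_add' _ _ := rfl
  map_smul' _ _ := rfl

/-- The linear map `τ : S(μ) → S(μ')` with `v_t ↦ v_{t'}`. -/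
def fwdTau (F : Type*) [Field F] (μ : YoungDiagram) (n : ℕ) :
    (StdTab μ n → F) →ₗ[F] (StdTab μ.transpose n → F) where
  toFun f := fun s => f (backConjTab s)
  map_add' _ _ := rfl
  map_smul' _ _ := rfl

/-- For a self-conjugate shape, the conjugate tableau `t'` of `t`, as a standard
tableau of the same shape. -/
def selfConjTab {μ : YoungDiagram} (hself : μ.transpose = μ) {n : ℕ}
    (t : StdTab μ n) : StdTab μ n :=
  ⟨conjPos t.val, by have h := isStdTab_conj t.prop; rwa [hself] at h⟩

/-- For a self-conjugate shape, the linear involution `τ` of `S(μ)` with `v_t ↦ v_{t'}`. -/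
def selfTau {F : Type*} [Field F] {μ : YoungDiagram} (hself : μ.transpose = μ) (n : ℕ) :
    (StdTab μ n → F) →ₗ[F] (StdTab μ n → F) where
  toFun f := fun t => f (selfConjTab hself t)
  map_add' _ _ := rfl
  map_smul' _ _ := rfl

/-- `act` is the (right) seminormal representation of the Hecke algebra on the Specht
module `S(μ)`, with basis `{v_t}` indexed by the standard `μ`-tableaux, on which the
generators act by `v_t T_i = (−1/[ρ_t(i)]) v_t + α_t(i) v_{t·s_i}`. -/
def SpechtRep {F : Type*} [Field F] (q sqm1 : F) (sq : ℕ → F) (n : ℕ)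
    {H : Type*} [Ring H] [Algebra F H] (T : Equiv.Perm (Fin n) → H)
    (μ : YoungDiagram) (act : H →ₗ[F] Module.End F (StdTab μ n → F)) : Prop :=
  act 1 = 1 ∧ (∀ a b : H, act (a * b) = act b * act a) ∧
    ∀ (i : ℕ) (hi : i + 1 < n) (t : StdTab μ n),
      act (T (sTr n i)) (Pi.single t (1 : F) : StdTab μ n → F) =
        (-(qint q (rhoAx t.val i hi))⁻¹) • (Pi.single t (1 : F) : StdTab μ n → F) +
          (if h : IsStdTab μ (swapEnt t.val i hi) then
            alph q sqm1 sq (rhoAx t.val i hi) •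
              (Pi.single (⟨swapEnt t.val i hi, h⟩ : StdTab μ n) (1 : F) : StdTab μ n → F)
           else 0)

section QintLemmas
variable {F : Type*} [Field F]

lemma qint_zero (q : F) : qint q 0 = 0 := by
  show ∑ j ∈ Finset.range 0, q ^ (2 * j + 1) = 0
  simp

lemma qint_natCast (q : F) (k : ℕ) :
    qint q (k : ℤ) = ∑ j ∈ Finset.range k, q ^ (2 * j + 1) := rfl

lemma qint_neg (q : F) (hq0 : q ≠ 0) (k : ℕ) :
    qint q (-(k : ℤ)) = -(q ^ (2 * k))⁻¹ * qint q (k : ℤ) := by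
  cases k with
  | zero => simp [qint_zero]
  | succ k =>
    have h1 : (-((k+1 : ℕ) : ℤ)) = Int.negSucc k := by
      rw [Int.negSucc_eq]; push_cast; ring
    rw [h1, qint_natCast]
    have key : ∑ j ∈ Finset.range (k+1), (q ^ (2*j+1))⁻¹
        = (q ^ (2*(k+1)))⁻¹ * ∑ j ∈ Finset.range (k+1), q ^ (2*j+1) := by
      rw [← Finset.sum_range_reflect (fun j => q ^ (2*j+1)) (k+1), Finset.mul_sum]
      refine Finset.sum_congr rfl fun j hj => ?_
      have hj' : j ≤ k := by simpa [Nat.lt_succ_iff] using hj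
      have he : q ^ (2*(k+1)) = q ^ (2*(k + 1 - 1 - j)+1) * q ^ (2*j+1) := by
        rw [← pow_add]; congr 1; omega
      rw [he, mul_inv]
      field_simp
    show -∑ j ∈ Finset.range (k+1), (q ^ (2*j+1))⁻¹
       = -(q ^ (2*(k+1)))⁻¹ * ∑ j ∈ Finset.range (k+1), q ^ (2*j+1)
    rw [key]; ring

lemma qint_id (q : F) (hq0 : q ≠ 0) (k : ℕ) :
    1 + (q - q⁻¹) * qint q (k : ℤ) = q ^ (2 * k) := by
  induction k with
  | zero => simp [qint_zero]
  | succ k ih =>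
    have h : qint q ((k+1 : ℕ) : ℤ) = qint q (k : ℤ) + q ^ (2*k+1) := by
      rw [qint_natCast, qint_natCast, Finset.sum_range_succ]
    rw [h, mul_add, ← add_assoc, ih]
    have h2 : 2 * (k + 1) = 2 * k + 2 := by ring
    rw [h2]
    field_simp
    ring

lemma qint_inv_id (q : F) (hq0 : q ≠ 0) {n : ℕ}
    (hqint : ∀ k : ℕ, 1 ≤ k → k ≤ n → qint q (k : ℤ) ≠ 0)
    (m : ℤ) (h1 : 1 ≤ m.natAbs) (h2 : m.natAbs ≤ n) :
    (q - q⁻¹) + (qint q m)⁻¹ = -(qint q (-m))⁻¹ := by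
  have hQ : ∀ k : ℕ, 1 ≤ k → k ≤ n →
      (q - q⁻¹) + (qint q (k:ℤ))⁻¹ = -(qint q (-(k:ℤ)))⁻¹ := by
    intro k hk1 hk2
    have hne := hqint k hk1 hk2
    rw [qint_neg q hq0 k, neg_mul, inv_neg, neg_neg, mul_inv, inv_inv, ← qint_id q hq0 k]
    field_simp
    ring
  rcases le_or_gt 0 m with h | h
  · have hm : m = (m.natAbs : ℤ) := by omega
    rw [hm]; exact hQ m.natAbs h1 h2
  · have hm : m = -(m.natAbs : ℤ) := by omega
    have := hQ m.natAbs h1 h2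
    rw [hm, neg_neg]
    -- goal: (q - q⁻¹) + (qint q (-(k:ℤ)))⁻¹ = -(qint q (k:ℤ))⁻¹
    have h3 : (qint q (-(m.natAbs:ℤ)))⁻¹ = -((q - q⁻¹) + (qint q ((m.natAbs:ℤ)))⁻¹) := by
      rw [this, neg_neg]
    rw [h3]; ring

lemma alph_neg (q sqm1 : F) (sq : ℕ → F) (hsq0 : sq 0 = 0) (m : ℤ) :
    alph q sqm1 sq (-m) = - alph q sqm1 sq m := by
  rcases lt_trichotomy m 0 with h | h | h
  · have h1 : ¬ (0 ≤ m) := by omega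
    have h2 : (0:ℤ) ≤ -m := by omega
    simp [alph, h1, h2, neg_neg]
    exact fun h' => absurd h' (by omega)
  · subst h
    simp [alph, hsq0]
  · have h1 : 0 ≤ m := le_of_lt h
    have h2 : ¬ ((0:ℤ) ≤ -m) := by omega
    simp [alph, h1, h2, neg_neg]
    exact fun h' => absurd h' (by omega)

end QintLemmas
section TabLemmas

lemma conjPos_conjPos {n : ℕ} (pos : Fin n → ℕ × ℕ) : conjPos (conjPos pos) = pos := by
  funext k; rfl

lemma backConjTab_conjTab {μ : YoungDiagram} {n : ℕ} (t : StdTab μ n) :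
    backConjTab (conjTab t) = t := by
  apply Subtype.ext
  exact conjPos_conjPos t.val

lemma conjTab_backConjTab {μ : YoungDiagram} {n : ℕ} (s : StdTab μ.transpose n) :
    conjTab (backConjTab s) = s := by
  apply Subtype.ext
  exact conjPos_conjPos s.val

lemma isStdTab_conj_iff {μ : YoungDiagram} {n : ℕ} (u : Fin n → ℕ × ℕ) :
    IsStdTab μ.transpose (conjPos u) ↔ IsStdTab μ u := by
  constructor
  · intro h
    have h2 := isStdTab_conj h
    rwa [YoungDiagram.transpose_transpose, conjPos_conjPos] at h2
  · exact isStdTab_conj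

lemma rhoAx_conjPos {n : ℕ} (pos : Fin n → ℕ × ℕ) (i : ℕ) (hi : i + 1 < n) :
    rhoAx (conjPos pos) i hi = -(rhoAx pos i hi) := by
  simp only [rhoAx, conjPos]
  ring

lemma swapEnt_conjPos {n : ℕ} (pos : Fin n → ℕ × ℕ) (i : ℕ) (hi : i + 1 < n) :
    swapEnt (conjPos pos) i hi = conjPos (swapEnt pos i hi) := rfl

instance stdTabFinite (μ : YoungDiagram) (n : ℕ) : Finite (StdTab μ n) := by
  have : Function.Injective
      (fun (t : StdTab μ n) => (fun k => (⟨t.val k, (YoungDiagram.mem_cells _).mpr (t.prop.2.1 k)⟩ :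
        {p // p ∈ μ.cells})) : StdTab μ n → (Fin n → {p // p ∈ μ.cells})) := by
    intro a b h
    apply Subtype.ext
    funext k
    have := congrFun h k
    exact congrArg Subtype.val this
  exact Finite.of_injective _ this

lemma tab_surj {μ : YoungDiagram} {n : ℕ} (hμ : μ.card = n) (t : StdTab μ n) :
    ∀ p ∈ μ, ∃ k : Fin n, t.val k = p := by
  classical
  have hcard : Fintype.card {p // p ∈ μ.cells} = n := by
    rw [Fintype.card_coe]; exact hμ
  set f : Fin n → {p // p ∈ μ.cells} :=
    fun k => ⟨t.val k, (YoungDiagram.mem_cells _).mpr (t.prop.2.1 k)⟩ with hf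
  have hinj : Function.Injective f := by
    intro a b h
    exact t.prop.1 (congrArg Subtype.val h)
  have hbij : Function.Bijective f := by
    rw [Fintype.bijective_iff_injective_and_card]
    exact ⟨hinj, by simp [hcard]⟩
  intro p hp
  obtain ⟨k, hk⟩ := hbij.2 ⟨p, (YoungDiagram.mem_cells _).mpr hp⟩
  exact ⟨k, congrArg Subtype.val hk⟩

lemma cell_count {μ : YoungDiagram} {n : ℕ} (hμ : μ.card = n) {p r : ℕ × ℕ}
    (hp : p ∈ μ) (hr : r ∈ μ) : p.2 + r.1 + 1 ≤ n := by
  classical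
  set A : Finset (ℕ × ℕ) := (Finset.range (p.2 + 1)).image (fun c => (p.1, c)) with hA
  set B : Finset (ℕ × ℕ) := (Finset.range (r.1 + 1)).image (fun s => (s, r.2)) with hB
  have hAsub : A ⊆ μ.cells := by
    intro x hx
    simp only [hA, Finset.mem_image, Finset.mem_range] at hx
    obtain ⟨c, hc, rfl⟩ := hx
    rw [YoungDiagram.mem_cells]
    exact μ.up_left_mem le_rfl (Nat.lt_succ_iff.mp hc) hp
  have hBsub : B ⊆ μ.cells := by
    intro x hx
    simp only [hB, Finset.mem_image, Finset.mem_range] at hx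
    obtain ⟨s, hs, rfl⟩ := hx
    rw [YoungDiagram.mem_cells]
    exact μ.up_left_mem (Nat.lt_succ_iff.mp hs) le_rfl hr
  have hAcard : A.card = p.2 + 1 := by
    rw [hA, Finset.card_image_of_injective _ (fun a b h => (Prod.mk.injEq _ _ _ _).mp h |>.2),
      Finset.card_range]
  have hBcard : B.card = r.1 + 1 := by
    rw [hB, Finset.card_image_of_injective _ (fun a b h => (Prod.mk.injEq _ _ _ _).mp h |>.1),
      Finset.card_range]
  have hinter : (A ∩ B) ⊆ {(p.1, r.2)} := by
    intro x hx
    rw [Finset.mem_inter] at hx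
    obtain ⟨hxA, hxB⟩ := hx
    simp only [hA, Finset.mem_image, Finset.mem_range] at hxA
    simp only [hB, Finset.mem_image, Finset.mem_range] at hxB
    obtain ⟨c, _, rfl⟩ := hxA
    obtain ⟨s, _, h2⟩ := hxB
    have h3 := (Prod.mk.injEq _ _ _ _).mp h2
    simp only [Finset.mem_singleton]
    rw [Prod.mk.injEq]
    exact ⟨rfl, h3.2.symm⟩
  have h4 : (A ∪ B).card + (A ∩ B).card = A.card + B.card :=
    Finset.card_union_add_card_inter A B
  have h5 : (A ∪ B).card ≤ n := by
    rw [← hμ]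
    exact Finset.card_le_card (Finset.union_subset hAsub hBsub)
  have h6 : (A ∩ B).card ≤ 1 := by
    calc (A ∩ B).card ≤ ({(p.1, r.2)} : Finset (ℕ × ℕ)).card := Finset.card_le_card hinter
    _ = 1 := Finset.card_singleton _
  omega

lemma rho_bounds {μ : YoungDiagram} {n : ℕ} (hμ : μ.card = n) (t : StdTab μ n)
    (i : ℕ) (hi : i + 1 < n) :
    1 ≤ (rhoAx t.val i hi).natAbs ∧ (rhoAx t.val i hi).natAbs ≤ n := by
  obtain ⟨hinj, hmem, hord⟩ := t.prop
  set a := t.val ⟨i, Nat.lt_of_succ_lt hi⟩ with ha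
  set b := t.val ⟨i + 1, hi⟩ with hb
  have hrho : rhoAx t.val i hi = ((a.2 : ℤ) - a.1) - ((b.2 : ℤ) - b.1) := rfl
  have hamem : a ∈ μ := hmem _
  have hbmem : b ∈ μ := hmem _
  have hub1 : a.2 + b.1 + 1 ≤ n := cell_count hμ hamem hbmem
  have hub2 : b.2 + a.1 + 1 ≤ n := cell_count hμ hbmem hamem
  have hne : a ≠ b := by
    intro h
    have := hinj (ha ▸ hb ▸ h)
    simp [Fin.ext_iff] at this
  constructor
  · -- rho ≠ 0
    rw [Nat.one_le_iff_ne_zero]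
    intro h0
    have h0' : rhoAx t.val i hi = 0 := by omega
    rw [hrho] at h0'
    -- a.2 + b.1 = b.2 + a.1
    have heq : a.2 + b.1 = b.2 + a.1 := by omega
    rcases Nat.lt_trichotomy a.1 b.1 with hlt | hEq | hgt
    · -- cell (b.1, a.2) ∈ μ
      have hc2 : a.2 < b.2 := by omega
      have hcell : (b.1, a.2) ∈ μ := μ.up_left_mem le_rfl (le_of_lt hc2) hbmem
      obtain ⟨m, hm⟩ := tab_surj hμ t _ hcell
      have hlt1 : (⟨i, Nat.lt_of_succ_lt hi⟩ : Fin n) < m := by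
        apply hord
        · rw [hm, ← ha]; exact le_of_lt hlt
        · rw [hm, ← ha]
        · rw [hm, ← ha]; intro hc; rw [Prod.ext_iff] at hc; omega
      have hlt2 : m < (⟨i + 1, hi⟩ : Fin n) := by
        apply hord
        · rw [hm, ← hb]
        · rw [hm, ← hb]; exact le_of_lt hc2
        · rw [hm, ← hb]; intro hc; rw [Prod.ext_iff] at hc; omega
      rw [Fin.lt_def] at hlt1 hlt2
      simp at hlt1 hlt2
      omega
    · exact hne (Prod.ext hEq (by omega))
    · -- cell (a.1, b.2) ∈ μ
      have hc2 : b.2 < a.2 := by omega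
      have hcell : (a.1, b.2) ∈ μ := μ.up_left_mem le_rfl (le_of_lt hc2) hamem
      obtain ⟨m, hm⟩ := tab_surj hμ t _ hcell
      have hlt1 : (⟨i + 1, hi⟩ : Fin n) < m := by
        apply hord
        · rw [hm, ← hb]; exact le_of_lt hgt
        · rw [hm, ← hb]
        · rw [hm, ← hb]; intro hc; rw [Prod.ext_iff] at hc; omega
      have hlt2 : m < (⟨i, Nat.lt_of_succ_lt hi⟩ : Fin n) := by
        apply hord
        · rw [hm, ← ha]
        · rw [hm, ← ha]; exact le_of_lt hc2
        · rw [hm, ← ha]; intro hc; rw [Prod.ext_iff] at hc; omega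
      rw [Fin.lt_def] at hlt1 hlt2
      simp at hlt1 hlt2
      omega
  · rw [hrho] at *
    omega

end TabLemmas
section LenLemmas

lemma sTr_mul_self (n i : ℕ) : sTr n i * sTr n i = 1 := by
  unfold sTr
  split
  · exact Equiv.swap_mul_self _ _
  · simp

lemma sTr_inv (n i : ℕ) : (sTr n i)⁻¹ = sTr n i :=
  inv_eq_of_mul_eq_one_right (sTr_mul_self n i)

lemma sTr_ne_one {n i : ℕ} (hi : i + 1 < n) : sTr n i ≠ 1 := by
  unfold sTr
  rw [dif_pos hi]
  intro h
  have := Equiv.swap_eq_one_iff.mp h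
  simp [Fin.ext_iff] at this

lemma exists_word (n : ℕ) (w : Equiv.Perm (Fin n)) :
    ∃ l : List ℕ, (∀ i ∈ l, i + 1 < n) ∧ w = (l.map (sTr n)).prod := by
  cases n with
  | zero =>
    refine ⟨[], by simp, ?_⟩
    simp only [List.map_nil, List.prod_nil]
    exact Equiv.ext fun x => x.elim0
  | succ m =>
    have hw : w ∈ Submonoid.closure
        (Set.range fun i : Fin m ↦ Equiv.swap i.castSucc i.succ) := by
      rw [Equiv.Perm.mclosure_swap_castSucc_succ]; trivial
    induction hw using Submonoid.closure_induction with
    | mem x hx =>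
      obtain ⟨i, rfl⟩ := hx
      refine ⟨[i.val], by intro j hj; simp at hj; subst hj; have := i.isLt; omega, ?_⟩
      simp only [List.map_cons, List.map_nil, List.prod_cons, List.prod_nil, mul_one]
      unfold sTr
      have hlt : i.val + 1 < m + 1 := by have := i.isLt; omega
      rw [dif_pos hlt]
      congr 1
    | one => exact ⟨[], by simp, by simp⟩
    | mul x y hx hy ihx ihy =>
      obtain ⟨lx, h1x, h2x⟩ := ihx
      obtain ⟨ly, h1y, h2y⟩ := ihy
      refine ⟨lx ++ ly, ?_, ?_⟩
      · intro i hi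
        rcases List.mem_append.mp hi with h | h
        · exact h1x i h
        · exact h1y i h
      · rw [List.map_append, List.prod_append, ← h2x, ← h2y]

lemma len_le (n : ℕ) (w : Equiv.Perm (Fin n)) (l : List ℕ)
    (hl : ∀ i ∈ l, i + 1 < n) (hp : w = (l.map (sTr n)).prod) : len n w ≤ l.length :=
  Nat.sInf_le ⟨l, rfl, hl, hp⟩

lemma exists_reduced (n : ℕ) (w : Equiv.Perm (Fin n)) :
    ∃ l : List ℕ, l.length = len n w ∧ (∀ i ∈ l, i + 1 < n) ∧ w = (l.map (sTr n)).prod := by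
  have hne : {k | ∃ l : List ℕ, l.length = k ∧ (∀ i ∈ l, i + 1 < n) ∧
      w = (l.map (sTr n)).prod}.Nonempty := by
    obtain ⟨l, h1, h2⟩ := exists_word n w
    exact ⟨l.length, l, rfl, h1, h2⟩
  exact Nat.sInf_mem hne

lemma len_one (n : ℕ) : len n 1 = 0 :=
  Nat.eq_zero_of_le_zero (len_le n 1 [] (by simp) (by simp))

lemma eq_one_of_len_eq_zero {n : ℕ} {w : Equiv.Perm (Fin n)} (h : len n w = 0) : w = 1 := by
  obtain ⟨l, h1, _, h3⟩ := exists_reduced n w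
  rw [h] at h1
  rw [List.length_eq_zero_iff] at h1
  subst h1
  simpa using h3

lemma len_sTr {n i : ℕ} (hi : i + 1 < n) : len n (sTr n i) = 1 := by
  have hle : len n (sTr n i) ≤ 1 := by
    apply len_le n _ [i]
    · simpa using hi
    · simp
  have hne : len n (sTr n i) ≠ 0 := fun h => sTr_ne_one hi (eq_one_of_len_eq_zero h)
  omega

lemma len_mul_le (n : ℕ) (a b : Equiv.Perm (Fin n)) : len n (a * b) ≤ len n a + len n b := by
  obtain ⟨la, h1a, h2a, h3a⟩ := exists_reduced n a
  obtain ⟨lb, h1b, h2b, h3b⟩ := exists_reduced n b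
  have := len_le n (a * b) (la ++ lb) (by
    intro i hi
    rcases List.mem_append.mp hi with h | h
    · exact h2a i h
    · exact h2b i h) (by rw [List.map_append, List.prod_append, ← h3a, ← h3b])
  simpa [h1a, h1b] using this

end LenLemmas
section TauLemmas
variable {F : Type*} [Field F] {μ : YoungDiagram} {n : ℕ}

lemma fwdTau_single (t : StdTab μ n) :
    fwdTau F μ n (Pi.single t (1 : F)) = Pi.single (conjTab t) (1 : F) := by
  funext s
  show (Pi.single t (1 : F) : StdTab μ n → F) (backConjTab s) = (Pi.single (conjTab t) (1 : F) : StdTab μ.transpose n → F) s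
  rcases eq_or_ne s (conjTab t) with rfl | h
  · rw [Pi.single_eq_same, backConjTab_conjTab, Pi.single_eq_same]
  · rw [Pi.single_eq_of_ne h, Pi.single_eq_of_ne]
    intro hc
    exact h (by rw [← hc, conjTab_backConjTab])

lemma crossTau_single (s : StdTab μ.transpose n) :
    crossTau F μ n (Pi.single s (1 : F)) = Pi.single (backConjTab s) (1 : F) := by
  funext t
  show (Pi.single s (1 : F) : StdTab μ.transpose n → F) (conjTab t) = (Pi.single (backConjTab s) (1 : F) : StdTab μ n → F) t
  rcases eq_or_ne t (backConjTab s) with rfl | h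
  · rw [Pi.single_eq_same, conjTab_backConjTab, Pi.single_eq_same]
  · rw [Pi.single_eq_of_ne h, Pi.single_eq_of_ne]
    intro hc
    exact h (by rw [← hc, backConjTab_conjTab])

lemma fwdTau_comp_crossTau :
    (fwdTau F μ n) ∘ₗ (crossTau F μ n) = LinearMap.id := by
  apply LinearMap.ext
  intro f
  funext s
  show f (conjTab (backConjTab s)) = f s
  rw [conjTab_backConjTab]

lemma crossTau_comp_fwdTau :
    (crossTau F μ n) ∘ₗ (fwdTau F μ n) = LinearMap.id := by
  apply LinearMap.ext
  intro f
  funext t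
  show f (backConjTab (conjTab t)) = f t
  rw [backConjTab_conjTab]

end TauLemmas
/-- Proposition `twist`: for every `w ∈ 𝔖ₙ` and every standard
`λ`-tableau `t`, `v_t T_w^# = τ(v_{t'} T_w)`, where `τ : S(λ') → S(λ)` is the linear
map `v_s ↦ v_{s'}`. -/
theorem specht_hash_twist
    {F : Type*} [Field F] (q : F) (hq0 : q ≠ 0) (hq1 : q ≠ 1) (n : ℕ)
    (hqint : ∀ k : ℕ, 1 ≤ k → k ≤ n → qint q (k : ℤ) ≠ 0)
    -- the chosen square roots √(−1) and √([k]) in F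
    (sqm1 : F) (hsqm1 : sqm1 ^ 2 = -1)
    (sq : ℕ → F) (hsq0 : sq 0 = 0)
    (hsq : ∀ k : ℕ, 1 ≤ k → k ≤ n → sq k ^ 2 = qint q (k : ℤ))
    {H : Type*} [Ring H] [Algebra F H]
    -- the Iwahori–Hecke algebra of type A with its basis of standard elements T_w
    (T : Equiv.Perm (Fin n) → H)
    (bT : Module.Basis (Equiv.Perm (Fin n)) F H) (hbT : ∀ w, bT w = T w)
    (hT1 : T 1 = 1)
    (hTunit : ∀ w, IsUnit (T w))
    (hmul1 : ∀ (w : Equiv.Perm (Fin n)) (i : ℕ), i + 1 < n →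
      len n (w * sTr n i) = len n w + 1 → T w * T (sTr n i) = T (w * sTr n i))
    (hmul2 : ∀ (w : Equiv.Perm (Fin n)) (i : ℕ), i + 1 < n →
      len n (w * sTr n i) + 1 = len n w →
      T w * T (sTr n i) = T (w * sTr n i) + (q - q⁻¹) • T w)
    -- the hash involution
    (hash : H ≃ₐ[F] H)
    (hhash : ∀ w, hash (T w) = ((-1 : F) ^ len n w) • Ring.inverse (T w⁻¹))
    -- the seminormal Specht modules S(λ) and S(λ')
    (μ : YoungDiagram) (hμ : μ.card = n)
    (act : H →ₗ[F] Module.End F (StdTab μ n → F))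
    (hact : SpechtRep q sqm1 sq n T μ act)
    (act' : H →ₗ[F] Module.End F (StdTab μ.transpose n → F))
    (hact' : SpechtRep q sqm1 sq n T μ.transpose act')
    (w : Equiv.Perm (Fin n)) (t : StdTab μ n) :
    act (hash (T w)) (Pi.single t (1 : F) : StdTab μ n → F)
      = crossTau F μ n
          (act' (T w) (Pi.single (conjTab t) (1 : F) : StdTab μ.transpose n → F)) := by
  classical
  obtain ⟨hact1, hactm, hactg⟩ := hact
  obtain ⟨hact1', hactm', hactg'⟩ := hact'
  -- hash of a generator
  have hhashS : ∀ i : ℕ, i + 1 < n →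
      hash (T (sTr n i)) = (q - q⁻¹) • (1 : H) - T (sTr n i) := by
    intro i hi
    have hs2 : T (sTr n i) * T (sTr n i) = (1 : H) + (q - q⁻¹) • T (sTr n i) := by
      have h := hmul2 (sTr n i) i hi (by rw [sTr_mul_self, len_one, len_sTr hi])
      rwa [sTr_mul_self, hT1] at h
    have hinv : T (sTr n i) * (T (sTr n i) - (q - q⁻¹) • (1 : H)) = 1 := by
      rw [mul_sub, hs2, mul_smul_comm, mul_one]
      abel
    have hRinv : Ring.inverse (T (sTr n i)) = T (sTr n i) - (q - q⁻¹) • (1 : H) := by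
      calc Ring.inverse (T (sTr n i))
          = Ring.inverse (T (sTr n i)) *
              (T (sTr n i) * (T (sTr n i) - (q - q⁻¹) • (1 : H))) := by rw [hinv, mul_one]
        _ = (Ring.inverse (T (sTr n i)) * T (sTr n i)) *
              (T (sTr n i) - (q - q⁻¹) • (1 : H)) := by rw [mul_assoc]
        _ = T (sTr n i) - (q - q⁻¹) • (1 : H) := by
              rw [Ring.inverse_mul_cancel _ (hTunit _), one_mul]
    rw [hhash, sTr_inv, hRinv, len_sTr hi, pow_one, neg_one_smul, neg_sub]
  -- the generator case, as an equality of endomorphisms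
  have hgen : ∀ (i : ℕ), i + 1 < n →
      act (hash (T (sTr n i))) =
        (crossTau F μ n) ∘ₗ (act' (T (sTr n i))) ∘ₗ (fwdTau F μ n) := by
    intro i hi
    have core : ∀ u : StdTab μ n,
        act (hash (T (sTr n i))) (Pi.single u (1 : F) : StdTab μ n → F) =
        (crossTau F μ n) ((act' (T (sTr n i)))
          ((fwdTau F μ n) (Pi.single u (1 : F) : StdTab μ n → F))) := by
      intro u
      obtain ⟨hb1, hb2⟩ := rho_bounds hμ u i hi
      have hrho' : rhoAx (conjTab u).val i hi = -(rhoAx u.val i hi) :=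
        rhoAx_conjPos u.val i hi
      rw [hhashS i hi, map_sub, map_smul, hact1, fwdTau_single,
        hactg' i hi (conjTab u), LinearMap.sub_apply, LinearMap.smul_apply,
        Module.End.one_apply, hactg i hi u, hrho']
      by_cases hstd : IsStdTab μ (swapEnt u.val i hi)
      · have hstd' : IsStdTab μ.transpose (swapEnt (conjTab u).val i hi) := by
          rw [show (conjTab u).val = conjPos u.val from rfl, swapEnt_conjPos]
          exact (isStdTab_conj_iff _).mpr hstd
        rw [dif_pos hstd, dif_pos hstd', map_add, map_smul, map_smul,
          crossTau_single]
        erw [crossTau_single]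
        rw [backConjTab_conjTab]
        have hback : backConjTab (⟨swapEnt (conjTab u).val i hi, hstd'⟩ :
            StdTab μ.transpose n) = (⟨swapEnt u.val i hi, hstd⟩ : StdTab μ n) := by
          apply Subtype.ext
          show conjPos (swapEnt (conjPos u.val) i hi) = swapEnt u.val i hi
          rw [swapEnt_conjPos, conjPos_conjPos]
        rw [hback, alph_neg q sqm1 sq hsq0, ← qint_inv_id q hq0 hqint _ hb1 hb2]
        module
      · have hstd' : ¬ IsStdTab μ.transpose (swapEnt (conjTab u).val i hi) := by
          rw [show (conjTab u).val = conjPos u.val from rfl, swapEnt_conjPos]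
          exact fun h => hstd ((isStdTab_conj_iff _).mp h)
        rw [dif_neg hstd, dif_neg hstd', add_zero, add_zero, map_smul,
          crossTau_single, backConjTab_conjTab, ← qint_inv_id q hq0 hqint _ hb1 hb2]
        module
    apply LinearMap.pi_ext
    intro u x
    have hsingle : (Pi.single u x : StdTab μ n → F)
        = x • (Pi.single u (1 : F) : StdTab μ n → F) := by
      funext v
      rcases eq_or_ne v u with rfl | h
      · simp
      · simp [Pi.single_eq_of_ne h]
    rw [hsingle, map_smul, map_smul, core u]
    simp [LinearMap.comp_apply]
  -- composition lemma
  have hcomp : ∀ (A B : Module.End F (StdTab μ.transpose n → F)),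
      ((crossTau F μ n) ∘ₗ A ∘ₗ (fwdTau F μ n)) * ((crossTau F μ n) ∘ₗ B ∘ₗ (fwdTau F μ n))
        = (crossTau F μ n) ∘ₗ (A * B) ∘ₗ (fwdTau F μ n) := by
    intro A B
    apply LinearMap.ext
    intro f
    have hfc : ∀ g : StdTab μ.transpose n → F,
        (fwdTau F μ n) ((crossTau F μ n) g) = g := by
      intro g
      have := LinearMap.congr_fun (fwdTau_comp_crossTau (F := F) (μ := μ) (n := n)) g
      simpa using this
    simp only [Module.End.mul_apply, LinearMap.comp_apply, hfc]
  -- induction over reduced words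
  have key : ∀ l : List ℕ, (∀ i ∈ l, i + 1 < n) →
      l.length = len n ((l.map (sTr n)).prod) →
      act (hash (T ((l.map (sTr n)).prod))) =
        (crossTau F μ n) ∘ₗ (act' (T ((l.map (sTr n)).prod))) ∘ₗ (fwdTau F μ n) := by
    intro l
    induction l using List.reverseRecOn with
    | nil =>
      intro _ _
      simp only [List.map_nil, List.prod_nil]
      rw [hT1, map_one, hact1, hact1']
      apply LinearMap.ext
      intro f
      show f = (crossTau F μ n) ((1 : Module.End F _) ((fwdTau F μ n) f))
      rw [Module.End.one_apply]
      have := LinearMap.congr_fun (crossTau_comp_fwdTau (F := F) (μ := μ) (n := n)) f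
      simpa using this.symm
    | append_singleton l i ih =>
      intro hvalid hlen
      have hi : i + 1 < n := hvalid i (by simp)
      have hvl : ∀ j ∈ l, j + 1 < n := fun j hj => hvalid j (List.mem_append_left _ hj)
      have hprod : (((l ++ [i]).map (sTr n)).prod) = (l.map (sTr n)).prod * sTr n i := by
        rw [List.map_append, List.prod_append]
        simp
      set y := (l.map (sTr n)).prod with hy
      have hw : len n (y * sTr n i) = l.length + 1 := by
        rw [← hprod, ← hlen]
        simp
      have hley : len n y ≤ l.length := len_le n y l hvl hy
      have hgey : l.length ≤ len n y := by
        have h1 := len_mul_le n y (sTr n i)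
        rw [hw, len_sTr hi] at h1
        omega
      have hleny : l.length = len n y := le_antisymm hgey hley
      have hTmul : T y * T (sTr n i) = T (y * sTr n i) :=
        hmul1 y i hi (by rw [hw, ← hleny])
      have e1 : act (hash (T (y * sTr n i))) = act (hash (T (sTr n i))) * act (hash (T y)) := by
        rw [← hTmul, map_mul, hactm]
      have e2 : act' (T (y * sTr n i)) = act' (T (sTr n i)) * act' (T y) := by
        rw [← hTmul, hactm']
      rw [hprod, e1, e2, hgen i hi, ih hvl hleny, hcomp]
  -- conclude
  obtain ⟨l, hlen, hval, hprod⟩ := exists_reduced n w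
  have hmap := key l hval (by rw [← hprod, hlen])
  rw [← hprod] at hmap
  rw [hmap]
  show (crossTau F μ n) ((act' (T w)) ((fwdTau F μ n) (Pi.single t 1))) = _
  rw [fwdTau_single]
end
end
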